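/- arXiv:1502.06411 — 3 statements merged into one kernel-verified Lean document; each statement's English description precedes it below -/
import Mathlib

section
/- Let Φ: H_2 → H_2 be a qubit quantum channel and let α ≥ 0. Then the minimum output Rényi α-entropy of Φ satisfies S_{min,α}(Φ) = h_{2,α}(f(‖Φ‖_{1→2})), where f(x) = (1 + √(2x² − 1))/2 and h_{2,α}(x) = (1/(1−α)) log(x^α + (1−x)^α) is the binary Rényi α-entropy (with h_{2,1}(x) = −x log x − (1−x) log(1−x)). -/
open scoped Matrix Kronecker BigOperators Classical ComplexOrder
open Filter

noncomputable section

variable {ι κ μ : Type*} [Fintype ι] [DecidableEq ι] [Fintype κ] [DecidableEq κ]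
  [Fintype μ] [DecidableEq μ]

/-- A density matrix: positive semidefinite with trace 1. -/
def IsDensity (ρ : Matrix ι ι ℂ) : Prop := ρ.PosSemidef ∧ ρ.trace = 1

/-- Trace-preserving map. -/
def IsTracePreserving (Φ : Matrix ι ι ℂ → Matrix κ κ ℂ) : Prop :=
  ∀ ρ, (Φ ρ).trace = ρ.trace

/-- Hermitian-preserving map (a real-linear map between the spaces of Hermitian matrices). -/
def IsHermitianPreserving (Φ : Matrix ι ι ℂ → Matrix κ κ ℂ) : Prop :=
  ∀ ρ, ρ.IsHermitian → (Φ ρ).IsHermitian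

/-- Unital: `Φ (I/n) = I/k`. -/
def IsUnital (Φ : Matrix ι ι ℂ → Matrix κ κ ℂ) : Prop :=
  Φ (((Fintype.card ι : ℂ))⁻¹ • 1) = ((Fintype.card κ : ℂ))⁻¹ • 1

/-- The ampliation `Φ ⊗ id` of a map on matrices. -/
def ampl (Φ : Matrix ι ι ℂ → Matrix κ κ ℂ) (ρ : Matrix (ι × μ) (ι × μ) ℂ) :
    Matrix (κ × μ) (κ × μ) ℂ :=
  Matrix.of fun p q => Φ (Matrix.of fun i j => ρ (i, p.2) (j, q.2)) p.1 q.1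

/-- Completely positive map: every ampliation sends PSD matrices to PSD matrices. -/
def IsCompletelyPositive (Φ : Matrix ι ι ℂ → Matrix κ κ ℂ) : Prop :=
  ∀ (m : ℕ) (ρ : Matrix (ι × Fin m) (ι × Fin m) ℂ), ρ.PosSemidef →
    (ampl (μ := Fin m) Φ ρ).PosSemidef

/-- Partial trace over the first tensor factor. -/
def ptraceFst (ρ : Matrix (ι × μ) (ι × μ) ℂ) : Matrix μ μ ℂ :=
  Matrix.of fun a b => ∑ i, ρ (i, a) (i, b)

/-- Rényi α-entropy of a (Hermitian) matrix, via its eigenvalues; α = 1 is von Neumann. -/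
def renyiEntropy (α : ℝ) (ρ : Matrix ι ι ℂ) : ℝ :=
  if h : ρ.IsHermitian then
    if α = 1 then -∑ i, h.eigenvalues i * Real.log (h.eigenvalues i)
    else (1 - α)⁻¹ * Real.log (∑ i, h.eigenvalues i ^ α)
  else 0

/-- Minimum output Rényi α-entropy of a map. -/
def Smin (α : ℝ) (Φ : Matrix ι ι ℂ → Matrix κ κ ℂ) : ℝ :=
  sInf {x | ∃ ρ, IsDensity ρ ∧ x = renyiEntropy α (Φ ρ)}

/-- The `1 → 2` norm: maximum over density matrices of `√(Tr (Φ ρ)²)`. -/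
def norm12 (Φ : Matrix ι ι ℂ → Matrix κ κ ℂ) : ℝ :=
  sSup {x | ∃ ρ, IsDensity ρ ∧ x = Real.sqrt ((Φ ρ * Φ ρ).trace.re)}

/-- The matrix `A_Φ` with respect to an orthonormal family `M` of traceless Hermitian matrices. -/
def APhi {N : ℕ} (Φ : Matrix ι ι ℂ → Matrix κ κ ℂ) (M : Fin N → Matrix ι ι ℂ) :
    Matrix (Fin N) (Fin N) ℝ :=
  Matrix.of fun i j => ((Φ (M i) * Φ (M j)).trace).re

/-- Operator (ℓ²→ℓ²) norm of a real square matrix. -/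
def opNorm {N : ℕ} (A : Matrix (Fin N) (Fin N) ℝ) : ℝ :=
  ‖Matrix.toEuclideanCLM (𝕜 := ℝ) A‖

/-- `γ(Φ)` as a function of the dimensions and of `‖A_Φ‖∞`. -/
def gammaPhi (n k : ℕ) (a : ℝ) : ℝ :=
  if (k : ℝ) * a ≤ (n : ℝ) then 1 / k + (1 - 1 / n) * a else a

/-- The function `f(x) = (1 + √(2x² − 1))/2`. -/
def fBloch (x : ℝ) : ℝ := (1 + Real.sqrt (2 * x ^ 2 - 1)) / 2

/-- Binary Rényi α-entropy. -/
def h2 (α x : ℝ) : ℝ :=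
  if α = 1 then -(x * Real.log x) - (1 - x) * Real.log (1 - x)
  else (1 - α)⁻¹ * Real.log (x ^ α + (1 - x) ^ α)

/-- Rényi α-entropy of a probability vector. -/
def HAlpha {n : ℕ} (α : ℝ) (p : Fin n → ℝ) : ℝ :=
  if α = 1 then -∑ j, p j * Real.log (p j)
  else (1 - α)⁻¹ * Real.log (∑ j, p j ^ α)

/-- The function `g_α(c)` of the paper. -/
def gA (α c : ℝ) : ℝ :=
  if α = 1 then
    Real.log (⌊1 / c⌋₊ + 1) - (1 / (1 + (⌊1 / c⌋₊ : ℝ))) *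
      ((⌊1 / c⌋₊ : ℝ) * (1 + Real.sqrt (c - (1 - c) / ⌊1 / c⌋₊)) *
          Real.log (1 + Real.sqrt (c - (1 - c) / ⌊1 / c⌋₊)) +
        (1 - (⌊1 / c⌋₊ : ℝ) * Real.sqrt (c - (1 - c) / ⌊1 / c⌋₊)) *
          Real.log (1 - (⌊1 / c⌋₊ : ℝ) * Real.sqrt (c - (1 - c) / ⌊1 / c⌋₊)))
  else
    (1 - α)⁻¹ * Real.log ((⌊1 / c⌋₊ : ℝ) *
        ((1 + Real.sqrt (c - (1 - c) / ⌊1 / c⌋₊)) / (1 + (⌊1 / c⌋₊ : ℝ))) ^ α +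
      ((1 - (⌊1 / c⌋₊ : ℝ) * Real.sqrt (c - (1 - c) / ⌊1 / c⌋₊)) / (1 + (⌊1 / c⌋₊ : ℝ))) ^ α)

/-- The `N`-fold tensor power of a map on matrices. -/
def tpow {n k : ℕ} (Φ : Matrix (Fin n) (Fin n) ℂ → Matrix (Fin k) (Fin k) ℂ) (N : ℕ)
    (ρ : Matrix (Fin N → Fin n) (Fin N → Fin n) ℂ) :
    Matrix (Fin N → Fin k) (Fin N → Fin k) ℂ :=
  Matrix.of fun f g => ∑ u : Fin N → Fin n, ∑ v : Fin N → Fin n,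
    ρ u v * ∏ i, Φ (Matrix.single (u i) (v i) 1) (f i) (g i)

/-- The Holevo quantity `χ(Φ)`. -/
def holevoChi (Φ : Matrix ι ι ℂ → Matrix κ κ ℂ) : ℝ :=
  sSup {x | ∃ (J : ℕ) (p : Fin J → ℝ) (ρ : Fin J → Matrix ι ι ℂ),
    (∀ j, 0 ≤ p j) ∧ (∑ j, p j = 1) ∧ (∀ j, IsDensity (ρ j)) ∧
    x = renyiEntropy 1 (∑ j, (p j : ℂ) • Φ (ρ j)) -
      ∑ j, p j * renyiEntropy 1 (Φ (ρ j))}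

/-- Schatten p-norm of a complex matrix (via the eigenvalues of `ρᴴρ`). -/
def schattenNorm (p : ℝ) (ρ : Matrix ι ι ℂ) : ℝ :=
  (∑ i, (Matrix.posSemidef_conjTranspose_mul_self ρ).1.eigenvalues i ^ (p / 2)) ^ (1 / p)

/-- The `p → 2` norm of a super operator on complex matrix spaces. -/
def superNorm (p : ℝ) (Φ : Matrix ι ι ℂ → Matrix κ κ ℂ) : ℝ :=
  sSup {x | ∃ ρ : Matrix ι ι ℂ, ρ ≠ 0 ∧ x = schattenNorm 2 (Φ ρ) / schattenNorm p ρ}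

/-- The cyclic-shift unitary `U|m⟩ = |m+1⟩`. -/
def shiftU (n : ℕ) [NeZero n] : Matrix (ZMod n) (ZMod n) ℂ :=
  Matrix.of fun i j => if i = j + 1 then 1 else 0

/-- The phase unitary `V|m⟩ = e^{2πim/n}|m⟩`. -/
def diagV (n : ℕ) [NeZero n] : Matrix (ZMod n) (ZMod n) ℂ :=
  Matrix.diagonal fun m => Complex.exp (2 * Real.pi * Complex.I * (m.val : ℂ) / n)

/-- Discrete Weyl operators `W_{x,y} = UˣVʸ`. -/
def Wmat (n : ℕ) [NeZero n] (x y : ZMod n) : Matrix (ZMod n) (ZMod n) ℂ :=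
  shiftU n ^ x.val * diagV n ^ y.val

/-- The index set `S_n`. -/
def weylS (n : ℕ) [NeZero n] : Set (ZMod n × ZMod n) :=
  {p | (1 ≤ p.1.val ∧ p.1.val < p.2.val) ∨
       (p.1 = p.2 ∧ 1 ≤ p.1.val ∧ p.1.val ≤ n / 2) ∨
       (p.1 = 0 ∧ 1 ≤ p.2.val ∧ p.2.val ≤ n / 2) ∨
       (p.2 = 0 ∧ 1 ≤ p.1.val ∧ p.1.val ≤ n / 2)}

/-- `S_n^F = S_n ∩ {(n/2,n/2), (0,n/2), (n/2,0)}` (empty for odd `n`). -/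
def weylSF (n : ℕ) [NeZero n] : Set (ZMod n × ZMod n) :=
  {p | p ∈ weylS n ∧ 2 * p.1 = 0 ∧ 2 * p.2 = 0}

/-- `S_n^{GH} = S_n \ S_n^F`. -/
def weylSGH (n : ℕ) [NeZero n] : Set (ZMod n × ZMod n) := weylS n \ weylSF n

/-- `F_{x,y} = W_{x,y}/√n`. -/
def Fmat (n : ℕ) [NeZero n] (p : ZMod n × ZMod n) : Matrix (ZMod n) (ZMod n) ℂ :=
  ((Real.sqrt n : ℂ))⁻¹ • Wmat n p.1 p.2

/-- `G_{x,y} = (W_{x,y} + W_{x,y}^*)/√(2n)`. -/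
def Gmat (n : ℕ) [NeZero n] (p : ZMod n × ZMod n) : Matrix (ZMod n) (ZMod n) ℂ :=
  ((Real.sqrt (2 * n) : ℂ))⁻¹ • (Wmat n p.1 p.2 + (Wmat n p.1 p.2)ᴴ)

/-- `H_{x,y} = (W_{x,y} − W_{x,y}^*)/(√(2n)·i)`. -/
def Hmat (n : ℕ) [NeZero n] (p : ZMod n × ZMod n) : Matrix (ZMod n) (ZMod n) ℂ :=
  (((Real.sqrt (2 * n) : ℂ)) * Complex.I)⁻¹ • (Wmat n p.1 p.2 - (Wmat n p.1 p.2)ᴴ)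

namespace QubitAux

open Real Set

lemma trace_eq_sum_eig {n : Type*} [Fintype n] [DecidableEq n]
    {A : Matrix n n ℂ} (hA : A.IsHermitian) :
    A.trace = ∑ i, (hA.eigenvalues i : ℂ) := by
  exact hA.trace_eq_sum_eigenvalues

lemma trace_sq_fin_two (σ : Matrix (Fin 2) (Fin 2) ℂ) :
    (σ * σ).trace = σ.trace ^ 2 - 2 * σ.det := by
  simp [Matrix.trace_fin_two, Matrix.mul_apply, Matrix.det_fin_two, Fin.sum_univ_two]
  ring

lemma cp_posSemidef {ι κ : Type*} [Fintype ι] [DecidableEq ι] [Fintype κ] [DecidableEq κ]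
    {Φ : Matrix ι ι ℂ → Matrix κ κ ℂ} (hCP : IsCompletelyPositive Φ)
    {ρ : Matrix ι ι ℂ} (hρ : ρ.PosSemidef) : (Φ ρ).PosSemidef := by
  let e : ι × Fin 1 ≃ ι := Equiv.prodUnique ι (Fin 1)
  have h1 : (ρ.submatrix e e).PosSemidef := hρ.submatrix e
  have h2 := hCP 1 _ h1
  have h3 : ampl (μ := Fin 1) Φ (ρ.submatrix e e) = (Φ ρ).submatrix
      (Equiv.prodUnique κ (Fin 1)) (Equiv.prodUnique κ (Fin 1)) := by
    ext p q
    simp only [ampl, Matrix.submatrix_apply, Matrix.of_apply]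
    congr 1
  rw [h3] at h2
  have := h2.submatrix (Equiv.prodUnique κ (Fin 1)).symm
  exact this

lemma uCont {α : ℝ} (hα : 0 ≤ α) :
    ContinuousOn (fun t : ℝ => t ^ α + (1 - t) ^ α) (Icc (1/2 : ℝ) 1) := by
  apply ContinuousOn.add
  · exact (continuousOn_id).rpow_const (fun x hx => Or.inl (fun h => by
      simp only [id_eq] at h; nlinarith [hx.1]))
  · exact ((continuousOn_const).sub continuousOn_id).rpow_const (fun x hx => Or.inr hα)

lemma uPos {α t : ℝ} (ht : t ∈ Icc (1/2 : ℝ) 1) :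
    0 < t ^ α + (1 - t) ^ α := by
  have h1 : (0:ℝ) < t ^ α := Real.rpow_pos_of_pos (by linarith [ht.1]) α
  have h2 : (0:ℝ) ≤ (1 - t) ^ α := Real.rpow_nonneg (by linarith [ht.2]) α
  linarith

lemma uDeriv {α t : ℝ} (ht : t ∈ Ioo (1/2 : ℝ) 1) :
    HasDerivAt (fun t : ℝ => t ^ α + (1 - t) ^ α)
      (α * t ^ (α - 1) + α * (1 - t) ^ (α - 1) * (-1)) t := by
  have h1 : HasDerivAt (fun x : ℝ => x ^ α) (α * t ^ (α - 1)) t :=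
    Real.hasDerivAt_rpow_const (Or.inl (by linarith [ht.1]))
  have h0 : HasDerivAt (fun x : ℝ => 1 - x) (-1) t := by
    simpa using (hasDerivAt_id t).const_sub 1
  have h2 : HasDerivAt (fun x : ℝ => (1 - x) ^ α) (α * (1 - t) ^ (α - 1) * (-1)) t :=
    (Real.hasDerivAt_rpow_const (p := α)
      (Or.inl (by intro h; rw [sub_eq_zero] at h; linarith [ht.2]))).comp t h0
  exact h1.add h2

lemma uMono {α : ℝ} (hα : 1 < α) :
    MonotoneOn (fun t : ℝ => t ^ α + (1 - t) ^ α) (Icc (1/2 : ℝ) 1) := by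
  apply monotoneOn_of_deriv_nonneg (convex_Icc _ _) (uCont (by linarith))
  · intro t ht
    rw [interior_Icc] at ht
    exact (uDeriv ht).differentiableAt.differentiableWithinAt
  · intro t ht
    rw [interior_Icc] at ht
    rw [(uDeriv ht).deriv]
    have : (1 - t) ^ (α - 1) ≤ t ^ (α - 1) :=
      Real.rpow_le_rpow (by linarith [ht.2]) (by linarith [ht.1]) (by linarith)
    nlinarith

lemma uAnti {α : ℝ} (hα0 : 0 < α) (hα : α < 1) :
    AntitoneOn (fun t : ℝ => t ^ α + (1 - t) ^ α) (Icc (1/2 : ℝ) 1) := by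
  apply antitoneOn_of_deriv_nonpos (convex_Icc _ _) (uCont (by linarith))
  · intro t ht
    rw [interior_Icc] at ht
    exact (uDeriv ht).differentiableAt.differentiableWithinAt
  · intro t ht
    rw [interior_Icc] at ht
    rw [(uDeriv ht).deriv]
    have : t ^ (α - 1) ≤ (1 - t) ^ (α - 1) :=
      Real.rpow_le_rpow_of_nonpos (by linarith [ht.2]) (by linarith [ht.1]) (by linarith)
    nlinarith

lemma h2ne {α : ℝ} (hα1 : α ≠ 1) :
    h2 α = fun x : ℝ => (1 - α)⁻¹ * Real.log (x ^ α + (1 - x) ^ α) := by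
  funext x; simp [h2, hα1]

lemma h2Anti {α : ℝ} (hα : 0 ≤ α) : AntitoneOn (h2 α) (Icc (1/2 : ℝ) 1) := by
  rcases eq_or_ne α 1 with rfl | hα1
  · apply antitoneOn_of_deriv_nonpos (convex_Icc _ _)
    · have heq : (h2 1 : ℝ → ℝ) = fun x => -(x * Real.log x) - (1 - x) * Real.log (1 - x) := by
        funext x; simp [h2]
      rw [heq]
      exact (Real.continuous_mul_log.neg.sub
        (Real.continuous_mul_log.comp (continuous_const.sub continuous_id))).continuousOn
    all_goals {
      intro t ht
      rw [interior_Icc] at ht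
      have hd : HasDerivAt (h2 1) (Real.log (1 - t) - Real.log t) t := by
        have h1 : HasDerivAt (fun x : ℝ => x * Real.log x) (Real.log t + 1) t :=
          Real.hasDerivAt_mul_log (by linarith [ht.1])
        have h0 : HasDerivAt (fun x : ℝ => 1 - x) (-1) t := by
          simpa using (hasDerivAt_id t).const_sub 1
        have h2' : HasDerivAt (fun x : ℝ => (1 - x) * Real.log (1 - x))
            ((Real.log (1 - t) + 1) * (-1)) t :=
          (Real.hasDerivAt_mul_log
            (by intro h; rw [sub_eq_zero] at h; linarith [ht.2])).comp t h0
        have := (h1.neg).sub h2'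
        have heq : (h2 1 : ℝ → ℝ) = fun x => -(x * Real.log x) - (1 - x) * Real.log (1 - x) := by
          funext x; simp [h2]
        rw [heq]
        refine this.congr_deriv ?_
        ring
      first
        | exact hd.differentiableAt.differentiableWithinAt
        | { rw [hd.deriv]
            have : Real.log (1 - t) ≤ Real.log t :=
              Real.log_le_log (by linarith [ht.2]) (by linarith [ht.1])
            linarith } }
  rcases eq_or_ne α 0 with rfl | hα0
  · have : h2 0 = fun _ : ℝ => Real.log 2 := by
      funext x; simp [h2]; norm_num
    rw [this]; exact antitoneOn_const
  rw [h2ne hα1]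
  rcases lt_or_gt_of_ne hα1 with hlt | hgt
  · intro x hx y hy hxy
    have hu : (fun t : ℝ => t ^ α + (1 - t) ^ α) y ≤ (fun t : ℝ => t ^ α + (1 - t) ^ α) x :=
      uAnti (lt_of_le_of_ne hα (Ne.symm hα0)) hlt hx hy hxy
    have hlog : Real.log (y ^ α + (1 - y) ^ α) ≤ Real.log (x ^ α + (1 - x) ^ α) :=
      Real.log_le_log (uPos hy) hu
    have hc : (0:ℝ) ≤ (1 - α)⁻¹ := inv_nonneg.mpr (by linarith)
    exact mul_le_mul_of_nonneg_left hlog hc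
  · intro x hx y hy hxy
    have hu : (fun t : ℝ => t ^ α + (1 - t) ^ α) x ≤ (fun t : ℝ => t ^ α + (1 - t) ^ α) y :=
      uMono hgt hx hy hxy
    have hlog : Real.log (x ^ α + (1 - x) ^ α) ≤ Real.log (y ^ α + (1 - y) ^ α) :=
      Real.log_le_log (uPos hx) hu
    have hc : (1 - α)⁻¹ ≤ 0 := by
      apply inv_nonpos.mpr; linarith
    exact mul_le_mul_of_nonpos_left hlog hc

lemma h2Cont {α : ℝ} (hα : 0 ≤ α) : ContinuousOn (h2 α) (Icc (1/2 : ℝ) 1) := by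
  rcases eq_or_ne α 1 with rfl | hα1
  · have heq : (h2 1 : ℝ → ℝ) = fun x => -(x * Real.log x) - (1 - x) * Real.log (1 - x) := by
      funext x; simp [h2]
    rw [heq]
    exact (Real.continuous_mul_log.neg.sub
      (Real.continuous_mul_log.comp (continuous_const.sub continuous_id))).continuousOn
  · rw [h2ne hα1]
    exact continuousOn_const.mul ((uCont hα).log (fun x hx => (uPos hx).ne'))

lemma h2symm (α x : ℝ) : h2 α (1 - x) = h2 α x := by
  rcases eq_or_ne α 1 with rfl | hα1
  · simp only [h2, if_pos, sub_sub_cancel]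
    ring
  · simp only [h2, if_neg hα1, sub_sub_cancel]
    rw [add_comm]

/-- The key computation for a 2×2 density matrix. -/
lemma density_facts (α : ℝ) {σ : Matrix (Fin 2) (Fin 2) ℂ} (hσ : IsDensity σ) :
    Real.sqrt ((σ * σ).trace.re) ∈ Icc (Real.sqrt (1/2)) 1 ∧
      renyiEntropy α σ = h2 α (fBloch (Real.sqrt ((σ * σ).trace.re))) := by
  have hH : σ.IsHermitian := hσ.1.1
  set a := hH.eigenvalues 0 with ha_def
  set b := hH.eigenvalues 1 with hb_def
  have ha0 : 0 ≤ a := hσ.1.eigenvalues_nonneg 0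
  have hb0 : 0 ≤ b := hσ.1.eigenvalues_nonneg 1
  have hab : a + b = 1 := by
    have h1 : σ.trace = ((a + b : ℝ) : ℂ) := by
      rw [trace_eq_sum_eig hH, Fin.sum_univ_two]; push_cast; rfl
    rw [hσ.2] at h1
    exact_mod_cast h1.symm
  have hdet : σ.det = ((a * b : ℝ) : ℂ) := by
    rw [hH.det_eq_prod_eigenvalues, Fin.prod_univ_two]; push_cast; rfl
  have htr2 : ((σ * σ).trace.re) = a ^ 2 + b ^ 2 := by
    rw [trace_sq_fin_two, hσ.2, hdet]
    have : (1 : ℂ) ^ 2 - 2 * ((a * b : ℝ) : ℂ) = ((1 - 2 * (a * b) : ℝ) : ℂ) := by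
      push_cast; ring
    rw [this, Complex.ofReal_re]
    nlinarith
  have hs_le : a ^ 2 + b ^ 2 ≤ 1 := by nlinarith [sq_nonneg (a + b), sq_nonneg (a - b)]
  have hs_ge : (1/2 : ℝ) ≤ a ^ 2 + b ^ 2 := by nlinarith [sq_nonneg (a - b), sq_nonneg (a + b)]
  have hsqmem : Real.sqrt ((σ * σ).trace.re) ∈ Icc (Real.sqrt (1/2)) 1 := by
    rw [htr2]
    constructor
    · exact Real.sqrt_le_sqrt hs_ge
    · rw [show (1:ℝ) = Real.sqrt 1 by rw [Real.sqrt_one]]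
      exact Real.sqrt_le_sqrt hs_le
  refine ⟨hsqmem, ?_⟩
  have hfb : fBloch (Real.sqrt ((σ * σ).trace.re)) = max a b := by
    rw [fBloch, htr2, Real.sq_sqrt (by nlinarith)]
    have h1 : 2 * (a ^ 2 + b ^ 2) - 1 = (a - b) ^ 2 := by nlinarith
    rw [h1, Real.sqrt_sq_eq_abs]
    rcases le_total a b with h | h
    · rw [abs_of_nonpos (by linarith), max_eq_right h]; linarith
    · rw [abs_of_nonneg (by linarith), max_eq_left h]; linarith
  rw [hfb]
  have hb1 : b = 1 - a := by linarith
  have hren : renyiEntropy α σ = h2 α a := by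
    rw [renyiEntropy, dif_pos hH]
    rcases eq_or_ne α 1 with rfl | hα1
    · rw [if_pos rfl, h2, if_pos rfl, Fin.sum_univ_two, ← ha_def, ← hb_def, hb1]
      ring
    · rw [if_neg hα1, h2, if_neg hα1, Fin.sum_univ_two, ← ha_def, ← hb_def, hb1]
  rw [hren]
  rcases le_total a b with h | h
  · rw [max_eq_right h, hb1, h2symm]
  · rw [max_eq_left h]

end QubitAux


/-- Corollary: an exact formula for qubit channels.
For a qubit channel `Φ : H₂ → H₂` and `α ≥ 0`:
`S_{min,α}(Φ) = h_{2,α}(f(‖Φ‖₁→₂))`. -/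
theorem qubit_channel_min_entropy_formula
    (Φ : Matrix (Fin 2) (Fin 2) ℂ →ₗ[ℂ] Matrix (Fin 2) (Fin 2) ℂ)
    (hCP : IsCompletelyPositive ⇑Φ) (hTP : IsTracePreserving ⇑Φ)
    (α : ℝ) (hα : 0 ≤ α) :
    Smin α ⇑Φ = h2 α (fBloch (norm12 ⇑Φ)) := by
  classical
  set c : ℝ := Real.sqrt (1/2) with hc
  have hc0 : 0 ≤ c := Real.sqrt_nonneg _
  have hc1 : c ≤ 1 := by
    rw [hc]
    have := Real.sqrt_le_sqrt (by norm_num : (1/2:ℝ) ≤ 1)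
    rwa [Real.sqrt_one] at this
  set clamp : ℝ → ℝ := fun x => min 1 (max c x) with hclampdef
  have hclamp_mem : ∀ x, clamp x ∈ Set.Icc c 1 := fun x =>
    ⟨le_min hc1 (le_max_left _ _), min_le_left _ _⟩
  have hclamp_id : ∀ x ∈ Set.Icc c 1, clamp x = x := by
    intro x hx
    simp only [hclampdef, max_eq_right hx.1, min_eq_right hx.2]
  have hfmono : MonotoneOn fBloch (Set.Icc c 1) := by
    intro x hx y hy hxy
    unfold fBloch
    have h1 : 2 * x ^ 2 - 1 ≤ 2 * y ^ 2 - 1 := by nlinarith [hx.1]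
    have h2 := Real.sqrt_le_sqrt h1
    linarith
  have hfmem : ∀ x ∈ Set.Icc c 1, fBloch x ∈ Set.Icc (1/2 : ℝ) 1 := by
    intro x hx
    unfold fBloch
    constructor
    · have := Real.sqrt_nonneg (2 * x ^ 2 - 1); linarith
    · have h1 : 2 * x ^ 2 - 1 ≤ 1 := by nlinarith [hx.2, hx.1]
      have h2 := Real.sqrt_le_sqrt h1
      rw [Real.sqrt_one] at h2
      linarith
  set H : ℝ → ℝ := fun x => h2 α (fBloch (clamp x)) with hHdef
  have Hanti : Antitone H := by
    intro x y hxy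
    exact QubitAux.h2Anti hα (hfmem _ (hclamp_mem x)) (hfmem _ (hclamp_mem y))
      (hfmono (hclamp_mem x) (hclamp_mem y)
        (min_le_min le_rfl (max_le_max le_rfl hxy)))
  have Hcont : Continuous H := by
    have hclamp_cont : Continuous clamp :=
      continuous_const.min (continuous_const.max continuous_id)
    have hf_cont : Continuous fBloch := by
      unfold fBloch
      exact (continuous_const.add (Real.continuous_sqrt.comp (by continuity))).div_const 2
    exact (QubitAux.h2Cont hα).comp_continuous (hf_cont.comp hclamp_cont)
      (fun x => hfmem _ (hclamp_mem x))
  set T : Set ℝ := {x | ∃ ρ, IsDensity ρ ∧ x = Real.sqrt ((Φ ρ * Φ ρ).trace.re)} with hTdef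
  have hΦdens : ∀ ρ, IsDensity ρ → IsDensity (Φ ρ) := fun ρ hρ =>
    ⟨QubitAux.cp_posSemidef hCP hρ.1, by rw [hTP, hρ.2]⟩
  have hTsub : T ⊆ Set.Icc c 1 := by
    rintro x ⟨ρ, hρ, rfl⟩
    exact (QubitAux.density_facts α (hΦdens ρ hρ)).1
  have hTne : T.Nonempty := by
    refine ⟨_, ⟨(2:ℂ)⁻¹ • 1, ?_, rfl⟩⟩
    constructor
    · have hdiag : (2:ℂ)⁻¹ • (1 : Matrix (Fin 2) (Fin 2) ℂ)
          = Matrix.diagonal (fun _ => (2:ℂ)⁻¹) := by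
        ext i j
        by_cases h : i = j <;> simp [Matrix.one_apply, h]
      rw [hdiag]
      refine Matrix.posSemidef_diagonal_iff.mpr fun i => ?_
      rw [Complex.le_def]
      norm_num
    · simp [Matrix.trace_smul, Matrix.trace_one]
  have hTbdd : BddAbove T := ⟨1, fun x hx => (hTsub hx).2⟩
  have hsSup_mem : sSup T ∈ Set.Icc c 1 := by
    obtain ⟨x0, hx0⟩ := hTne
    exact ⟨le_trans (hTsub hx0).1 (le_csSup hTbdd hx0),
      csSup_le ⟨x0, hx0⟩ (fun x hx => (hTsub hx).2)⟩
  have hset : {x | ∃ ρ, IsDensity ρ ∧ x = renyiEntropy α (Φ ρ)} = H '' T := by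
    ext y
    constructor
    · rintro ⟨ρ, hρ, rfl⟩
      refine ⟨Real.sqrt ((Φ ρ * Φ ρ).trace.re), ⟨ρ, hρ, rfl⟩, ?_⟩
      have hd := QubitAux.density_facts α (hΦdens ρ hρ)
      simp only [hHdef]
      rw [hclamp_id _ hd.1, ← hd.2]
    · rintro ⟨x, ⟨ρ, hρ, rfl⟩, rfl⟩
      refine ⟨ρ, hρ, ?_⟩
      have hd := QubitAux.density_facts α (hΦdens ρ hρ)
      simp only [hHdef]
      rw [hclamp_id _ hd.1, hd.2]
  have h1 : Smin α ⇑Φ = sInf (H '' T) := by rw [Smin, hset]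
  have h2' : H (sSup T) = sInf (H '' T) :=
    Antitone.map_csSup_of_continuousAt (Hcont.continuousAt) Hanti hTne hTbdd
  have h3 : norm12 ⇑Φ = sSup T := rfl
  rw [h1, ← h2', h3, hHdef]
  show h2 α (fBloch (clamp (sSup T))) = h2 α (fBloch (sSup T))
  rw [hclamp_id _ hsSup_mem]


end
end

section
/- Let Φ: H_n → H_k be a unital trace-preserving linear map, and let ρ be any Hermitian operator on ℂ^n ⊗ ℂ^m, with ρ_K = Tr_{ℂ^n}[ρ] its partial trace over the first factor. Then Tr[ ((Φ ⊗ id_m)(ρ))² ] ≤ (1/k − ‖A_Φ‖_∞/n)·Tr[ρ_K²] + ‖A_Φ‖_∞·Tr[ρ²], where id_m is the identity map on m×m Hermitian matrices. -/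
open scoped Matrix Kronecker BigOperators Classical ComplexOrder
open Filter

noncomputable section

variable {ι κ μ : Type*} [Fintype ι] [DecidableEq ι] [Fintype κ] [DecidableEq κ]
  [Fintype μ] [DecidableEq μ]

section UATNBHelpers

open scoped RealInnerProductSpace

lemma uatnb_quadform_le {N : ℕ} (A : Matrix (Fin N) (Fin N) ℝ) (x : Fin N → ℝ) :
    ∑ i, ∑ j, A i j * (x i * x j) ≤ opNorm A * ∑ i, x i ^ 2 := by
  set x' : EuclideanSpace ℝ (Fin N) := (WithLp.equiv _ _).symm x with hx'
  have hmv : Matrix.toEuclideanCLM (𝕜 := ℝ) A x' = (WithLp.equiv _ _).symm (A.mulVec x) :=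
    Matrix.toEuclideanCLM_toLp A x
  have h1 : ∑ i, ∑ j, A i j * (x i * x j) = ⟪x', Matrix.toEuclideanCLM (𝕜 := ℝ) A x'⟫ := by
    rw [hmv, PiLp.inner_apply]
    simp only [RCLike.inner_apply, conj_trivial, hx', WithLp.equiv_symm_apply, WithLp.ofLp_toLp, PiLp.toLp_apply,
      Matrix.mulVec, dotProduct, Finset.mul_sum, Finset.sum_mul]
    exact Finset.sum_congr rfl fun i _ => Finset.sum_congr rfl fun j _ => by ring
  have h2 : ∑ i, x i ^ 2 = ‖x'‖ ^ 2 := by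
    rw [← real_inner_self_eq_norm_sq, PiLp.inner_apply]
    simp only [RCLike.inner_apply, conj_trivial, hx', WithLp.equiv_symm_apply, WithLp.ofLp_toLp, PiLp.toLp_apply, sq]
  rw [h1, h2]
  calc ⟪x', Matrix.toEuclideanCLM (𝕜 := ℝ) A x'⟫
      ≤ ‖x'‖ * ‖Matrix.toEuclideanCLM (𝕜 := ℝ) A x'‖ := real_inner_le_norm _ _
    _ ≤ ‖x'‖ * (opNorm A * ‖x'‖) :=
        mul_le_mul_of_nonneg_left ((Matrix.toEuclideanCLM (𝕜 := ℝ) A).le_opNorm x') (norm_nonneg _)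
    _ = opNorm A * ‖x'‖ ^ 2 := by ring

lemma uatnb_trace_mul_expand {κ' : Type*} [Fintype κ'] [DecidableEq κ'] {N : ℕ}
    (B : Fin N → Matrix κ' κ' ℂ) (hB : ∀ i, (B i).trace = 0) (s u : ℂ) (c d : Fin N → ℂ) :
    ((s • 1 + ∑ i, c i • B i) * (u • 1 + ∑ i, d i • B i)).trace
      = s * u * (Fintype.card κ') + ∑ i, ∑ j, c i * d j * (B i * B j).trace := by
  simp only [add_mul, mul_add, Matrix.smul_mul, Matrix.mul_smul, Finset.sum_mul,
    Finset.mul_sum, one_mul, mul_one, Matrix.trace_add, Matrix.trace_sum, Matrix.trace_smul,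
    Matrix.trace_one, smul_smul, smul_eq_mul, hB, mul_zero, Finset.sum_const_zero, add_zero]
  ring_nf
  congr 1
  rw [Finset.sum_comm]
  exact Finset.sum_congr rfl fun i _ => Finset.sum_congr rfl fun j _ => by ring

lemma uatnb_mem_spanC {n N : ℕ} (M : Fin N → Matrix (Fin n) (Fin n) ℂ)
    (hMspan : ∀ ρ : Matrix (Fin n) (Fin n) ℂ, ρ.IsHermitian → ρ.trace = 0 →
      ρ ∈ Submodule.span ℝ (Set.range M))
    (Z : Matrix (Fin n) (Fin n) ℂ) (hZ : Z.trace = 0) :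
    Z ∈ Submodule.span ℂ (Set.range M) := by
  have hle : Submodule.span ℝ (Set.range M) ≤
      (Submodule.span ℂ (Set.range M)).restrictScalars ℝ :=
    Submodule.span_le.mpr Submodule.subset_span
  set H : Matrix (Fin n) (Fin n) ℂ := (2⁻¹ : ℂ) • (Z + Zᴴ) with hH
  set K : Matrix (Fin n) (Fin n) ℂ := (Complex.I / 2) • (Zᴴ - Z) with hK
  have hZHtr : Zᴴ.trace = 0 := by rw [Matrix.trace_conjTranspose, hZ, star_zero]
  have hHherm : H.IsHermitian := by
    rw [Matrix.IsHermitian, hH, Matrix.conjTranspose_smul, Matrix.conjTranspose_add,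
      Matrix.conjTranspose_conjTranspose]
    simp [add_comm]
  have hKherm : K.IsHermitian := by
    rw [Matrix.IsHermitian, hK, Matrix.conjTranspose_smul, Matrix.conjTranspose_sub,
      Matrix.conjTranspose_conjTranspose]
    have : star (Complex.I / 2) = -(Complex.I / 2) := by
      rw [star_div₀]; simp [Complex.star_def, Complex.conj_I, neg_div]
    rw [this, neg_smul, ← smul_neg, neg_sub]
  have hHtr : H.trace = 0 := by rw [hH, Matrix.trace_smul, Matrix.trace_add, hZ, hZHtr]; simp
  have hKtr : K.trace = 0 := by rw [hK, Matrix.trace_smul, Matrix.trace_sub, hZ, hZHtr]; simp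
  have hHm : H ∈ Submodule.span ℂ (Set.range M) := hle (hMspan H hHherm hHtr)
  have hKm : K ∈ Submodule.span ℂ (Set.range M) := hle (hMspan K hKherm hKtr)
  have hrec : Z = H + Complex.I • K := by
    rw [hH, hK, smul_smul]
    have : Complex.I * (Complex.I / 2) = -(2⁻¹ : ℂ) := by
      rw [mul_div_assoc', Complex.I_mul_I]; norm_num
    rw [this]
    module
  rw [hrec]
  exact Submodule.add_mem _ hHm (Submodule.smul_mem _ _ hKm)

lemma uatnb_expand {n N : ℕ} (M : Fin N → Matrix (Fin n) (Fin n) ℂ)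
    (hMtr : ∀ i, (M i).trace = 0)
    (hMorth : ∀ i j, ((M i) * (M j)).trace = if i = j then 1 else 0)
    (hMspanC : ∀ Z : Matrix (Fin n) (Fin n) ℂ, Z.trace = 0 →
      Z ∈ Submodule.span ℂ (Set.range M))
    (hn : 0 < n) (X : Matrix (Fin n) (Fin n) ℂ) :
    X = (X.trace * (n : ℂ)⁻¹) • 1 + ∑ i, ((X * M i).trace) • M i := by
  have hn' : (n : ℂ) ≠ 0 := Nat.cast_ne_zero.mpr hn.ne'
  set Y : Matrix (Fin n) (Fin n) ℂ := X - (X.trace * (n : ℂ)⁻¹) • 1 with hY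
  have hYtr : Y.trace = 0 := by
    rw [hY, Matrix.trace_sub, Matrix.trace_smul, Matrix.trace_one]
    simp [Fintype.card_fin]
    field_simp
    ring
  obtain ⟨c, hc⟩ := Submodule.mem_span_range_iff_exists_fun ℂ |>.mp (hMspanC Y hYtr)
  have hcoef : ∀ j, (Y * M j).trace = c j := by
    intro j
    rw [← hc, Finset.sum_mul, Matrix.trace_sum]
    simp only [Matrix.smul_mul, Matrix.trace_smul, hMorth, smul_eq_mul, mul_ite, mul_one,
      mul_zero]
    simp
  have hXc : ∀ j, (X * M j).trace = c j := by
    intro j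
    rw [← hcoef j, hY, Matrix.sub_mul, Matrix.trace_sub, Matrix.smul_mul, Matrix.trace_smul,
      Matrix.one_mul, hMtr]
    simp
  calc X = (X.trace * (n : ℂ)⁻¹) • 1 + Y := by rw [hY]; abel
    _ = _ := by
        congr 1
        rw [← hc]
        exact Finset.sum_congr rfl fun j _ => by rw [hXc]

lemma uatnb_trace_mul_eq {ι' : Type*} [Fintype ι'] (P Q : Matrix ι' ι' ℂ) :
    (P * Q).trace = ∑ p, ∑ q, P p q * Q q p := by
  simp [Matrix.trace, Matrix.diag, Matrix.mul_apply]

lemma uatnb_sum4 {β : Type*} [AddCommMonoid β] {n₁ n₂ n₃ n₄ : Type*}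
    [Fintype n₁] [Fintype n₂] [Fintype n₃] [Fintype n₄] (F : n₁ → n₂ → n₃ → n₄ → β) :
    ∑ c : n₃, ∑ a : n₁, ∑ d : n₄, ∑ b : n₂, F a b c d
      = ∑ a : n₁, ∑ b : n₂, ∑ c : n₃, ∑ d : n₄, F a b c d := by
  rw [Finset.sum_comm]
  refine Finset.sum_congr rfl fun a _ => ?_
  have h1 : ∀ c : n₃, ∑ d : n₄, ∑ b : n₂, F a b c d = ∑ b : n₂, ∑ d : n₄, F a b c d :=
    fun c => Finset.sum_comm
  simp_rw [h1]
  exact Finset.sum_comm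

end UATNBHelpers

/-- Lemma 7 of the paper.
For a unital trace-preserving linear map `Φ : H_n → H_k` and any Hermitian `ρ` on `ℂⁿ ⊗ ℂᵐ`:
`Tr[((Φ⊗id)ρ)²] ≤ (1/k − ‖A_Φ‖∞/n)·Tr[ρ_K²] + ‖A_Φ‖∞·Tr[ρ²]`. -/
theorem unital_ampliation_two_norm_bound {n k m : ℕ} (hn : 0 < n) (hk : 0 < k)
    (Φ : Matrix (Fin n) (Fin n) ℂ →ₗ[ℂ] Matrix (Fin k) (Fin k) ℂ)
    (hU : IsUnital ⇑Φ) (hTP : IsTracePreserving ⇑Φ) (hHP : IsHermitianPreserving ⇑Φ)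
    (M : Fin (n ^ 2 - 1) → Matrix (Fin n) (Fin n) ℂ)
    (hMherm : ∀ i, (M i).IsHermitian) (hMtr : ∀ i, (M i).trace = 0)
    (hMorth : ∀ i j, ((M i) * (M j)).trace = if i = j then 1 else 0)
    (hMspan : ∀ ρ : Matrix (Fin n) (Fin n) ℂ, ρ.IsHermitian → ρ.trace = 0 →
      ρ ∈ Submodule.span ℝ (Set.range M))
    (ρ : Matrix (Fin n × Fin m) (Fin n × Fin m) ℂ) (hρ : ρ.IsHermitian) :
    ((ampl ⇑Φ ρ) * (ampl ⇑Φ ρ)).trace.re ≤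
      (1 / k - opNorm (APhi ⇑Φ M) / n) * ((ptraceFst ρ) * (ptraceFst ρ)).trace.re +
        opNorm (APhi ⇑Φ M) * (ρ * ρ).trace.re := by
  classical
  have hk' : (k : ℂ) ≠ 0 := Nat.cast_ne_zero.mpr hk.ne'
  have hn' : (n : ℂ) ≠ 0 := Nat.cast_ne_zero.mpr hn.ne'
  have hkR : (k : ℝ) ≠ 0 := Nat.cast_ne_zero.mpr hk.ne'
  have hnR : (n : ℝ) ≠ 0 := Nat.cast_ne_zero.mpr hn.ne'
  set α := opNorm (APhi ⇑Φ M) with hα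
  set A := APhi ⇑Φ M with hA
  have hU' : Φ ((n : ℂ)⁻¹ • 1) = (k : ℂ)⁻¹ • 1 := by
    simpa [IsUnital, Fintype.card_fin] using hU
  have hMspanC : ∀ Z : Matrix (Fin n) (Fin n) ℂ, Z.trace = 0 →
      Z ∈ Submodule.span ℂ (Set.range M) := uatnb_mem_spanC M hMspan
  have hΦMtr : ∀ i, (Φ (M i)).trace = 0 := fun i => (hTP (M i)).trans (hMtr i)
  -- the Gram matrix entries are real
  have hT : ∀ i j, (Φ (M i) * Φ (M j)).trace = ((A i j : ℝ) : ℂ) := by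
    intro i j
    have hherm : ∀ l, (Φ (M l))ᴴ = Φ (M l) := fun l => hHP (M l) (hMherm l)
    have hconj : (starRingEnd ℂ) ((Φ (M i) * Φ (M j)).trace) = (Φ (M i) * Φ (M j)).trace := by
      calc (starRingEnd ℂ) ((Φ (M i) * Φ (M j)).trace)
          = ((Φ (M i) * Φ (M j))ᴴ).trace := (Matrix.trace_conjTranspose _).symm
        _ = (Φ (M j) * Φ (M i)).trace := by rw [Matrix.conjTranspose_mul, hherm, hherm]
        _ = _ := Matrix.trace_mul_comm _ _
    have h2 := Complex.conj_eq_iff_re.mp hconj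
    have h3 : A i j = ((Φ (M i) * Φ (M j)).trace).re := rfl
    rw [h3]
    exact h2.symm
  -- expansion of Φ
  have hΦexp : ∀ X : Matrix (Fin n) (Fin n) ℂ,
      Φ X = (X.trace * (k : ℂ)⁻¹) • 1 + ∑ i, ((X * M i).trace) • Φ (M i) := by
    intro X
    conv_lhs => rw [uatnb_expand M hMtr hMorth hMspanC hn X]
    rw [map_add, map_sum]
    congr 1
    · rw [mul_smul, map_smul, hU', smul_smul]
    · exact Finset.sum_congr rfl fun i _ => map_smul Φ _ _
  have hconjc : ∀ (X : Matrix (Fin n) (Fin n) ℂ) j,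
      (Xᴴ * M j).trace = star ((X * M j).trace) := by
    intro X j
    have h1 : Xᴴ * M j = (M j * X)ᴴ := by
      rw [Matrix.conjTranspose_mul, (hMherm j).eq]
    rw [h1, Matrix.trace_conjTranspose, Matrix.trace_mul_comm]
  -- key identity
  have keyfun : ∀ X : Matrix (Fin n) (Fin n) ℂ,
      (Φ X * Φ Xᴴ).trace = X.trace * star X.trace * (k : ℂ)⁻¹
        + ∑ i, ∑ j, (X * M i).trace * star ((X * M j).trace) * ((A i j : ℝ) : ℂ) := by
    intro X
    rw [hΦexp X, hΦexp Xᴴ, Matrix.trace_conjTranspose,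
      uatnb_trace_mul_expand (fun i => Φ (M i)) hΦMtr _ _ _ _, Fintype.card_fin]
    congr 1
    · field_simp
    · refine Finset.sum_congr rfl fun i _ => Finset.sum_congr rfl fun j _ => ?_
      rw [hconjc X j, hT i j]
  -- Parseval identity
  have parseval : ∀ X : Matrix (Fin n) (Fin n) ℂ,
      (X * Xᴴ).trace = X.trace * star X.trace * (n : ℂ)⁻¹
        + ∑ i, (X * M i).trace * star ((X * M i).trace) := by
    intro X
    have e1 := uatnb_expand M hMtr hMorth hMspanC hn X
    have e2 := uatnb_expand M hMtr hMorth hMspanC hn Xᴴ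
    calc (X * Xᴴ).trace
        = (((X.trace * (n : ℂ)⁻¹) • 1 + ∑ i, ((X * M i).trace) • M i) *
            ((Xᴴ.trace * (n : ℂ)⁻¹) • 1 + ∑ i, ((Xᴴ * M i).trace) • M i)).trace := by
          rw [← e1, ← e2]
      _ = _ := by
          rw [uatnb_trace_mul_expand M hMtr _ _ _ _, Fintype.card_fin,
            Matrix.trace_conjTranspose]
          congr 1
          · field_simp
          · simp only [hMorth, mul_ite, mul_one, mul_zero, Finset.sum_ite_eq,
              Finset.sum_ite_eq', Finset.mem_univ, if_true]
            exact Finset.sum_congr rfl fun i _ => by rw [hconjc X i]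
  -- quadratic form bound
  have QB : ∀ c : Fin (n ^ 2 - 1) → ℂ,
      (∑ i, ∑ j, c i * star (c j) * ((A i j : ℝ) : ℂ)).re
        ≤ α * ∑ i, Complex.normSq (c i) := by
    intro c
    have hterm : ∀ i j, (c i * star (c j) * ((A i j : ℝ) : ℂ)).re
        = A i j * ((c i).re * (c j).re) + A i j * ((c i).im * (c j).im) := by
      intro i j
      simp only [Complex.star_def, Complex.mul_re, Complex.mul_im, Complex.conj_re,
        Complex.conj_im, Complex.ofReal_re, Complex.ofReal_im]
      ring
    rw [Complex.re_sum]
    simp_rw [Complex.re_sum, hterm, Finset.sum_add_distrib]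
    have b1 := uatnb_quadform_le A (fun i => (c i).re)
    have b2 := uatnb_quadform_le A (fun i => (c i).im)
    have hnsq : ∀ i, Complex.normSq (c i) = (c i).re ^ 2 + (c i).im ^ 2 := by
      intro i; rw [Complex.normSq_apply]; ring
    calc (∑ i, ∑ j, A i j * ((c i).re * (c j).re))
          + ∑ i, ∑ j, A i j * ((c i).im * (c j).im)
        ≤ α * ∑ i, (c i).re ^ 2 + α * ∑ i, (c i).im ^ 2 := add_le_add b1 b2
      _ = α * ∑ i, Complex.normSq (c i) := by
          simp_rw [hnsq, Finset.sum_add_distrib]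
          ring
  -- block decomposition
  set R : Fin m → Fin m → Matrix (Fin n) (Fin n) ℂ :=
    fun a b => Matrix.of fun i j => ρ (i, a) (j, b) with hR
  have hRherm : ∀ a b, (R a b)ᴴ = R b a := by
    intro a b
    ext i j
    have := congrFun (congrFun hρ (i, b)) (j, a)
    simpa [Matrix.conjTranspose_apply, hR] using this
  have htconj : ∀ a b, (R b a).trace = star ((R a b).trace) := by
    intro a b
    rw [← hRherm a b, Matrix.trace_conjTranspose]
  -- sum identities
  have L1 : ((ampl ⇑Φ ρ) * (ampl ⇑Φ ρ)).trace
      = ∑ a : Fin m, ∑ b : Fin m, (Φ (R a b) * Φ (R b a)).trace := by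
    simp only [uatnb_trace_mul_eq, Fintype.sum_prod_type]
    exact uatnb_sum4 (fun a b c d => Φ (R a b) c d * Φ (R b a) d c)
  have L2 : (ρ * ρ).trace = ∑ a : Fin m, ∑ b : Fin m, ((R a b) * (R b a)).trace := by
    simp only [uatnb_trace_mul_eq, Fintype.sum_prod_type]
    exact uatnb_sum4 (fun a b i j => R a b i j * R b a j i)
  have L3 : ((ptraceFst ρ) * (ptraceFst ρ)).trace
      = ∑ a : Fin m, ∑ b : Fin m, (R a b).trace * (R b a).trace := by
    rw [uatnb_trace_mul_eq]
    refine Finset.sum_congr rfl fun a _ => Finset.sum_congr rfl fun b _ => ?_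
    congr 1
  -- per-block bound
  have main_ab : ∀ a b, (Φ (R a b) * Φ (R b a)).trace.re
      ≤ (1 / k - α / n) * Complex.normSq ((R a b).trace)
        + α * (((R a b) * (R b a)).trace).re := by
    intro a b
    set X := R a b with hX
    have hba : R b a = Xᴴ := (hRherm a b).symm
    rw [hba]
    have hkey := keyfun X
    have hpar := parseval X
    have hmc : X.trace * star X.trace = (Complex.normSq X.trace : ℂ) := by
      rw [Complex.star_def, Complex.mul_conj]
    have h1 : (X.trace * star X.trace * (k : ℂ)⁻¹).re
        = Complex.normSq X.trace * (k : ℝ)⁻¹ := by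
      rw [hmc, show ((k : ℂ))⁻¹ = (((k : ℝ)⁻¹ : ℝ) : ℂ) by push_cast; ring,
        ← Complex.ofReal_mul, Complex.ofReal_re]
    have h2 : ((X * Xᴴ).trace).re = Complex.normSq X.trace * (n : ℝ)⁻¹
        + ∑ i, Complex.normSq ((X * M i).trace) := by
      rw [hpar, Complex.add_re, hmc,
        show ((n : ℂ))⁻¹ = (((n : ℝ)⁻¹ : ℝ) : ℂ) by push_cast; ring,
        ← Complex.ofReal_mul, Complex.ofReal_re, Complex.re_sum]
      congr 1
      refine Finset.sum_congr rfl fun i _ => ?_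
      rw [Complex.star_def, Complex.mul_conj, Complex.ofReal_re]
    have hsum : ∑ i, Complex.normSq ((X * M i).trace)
        = ((X * Xᴴ).trace).re - Complex.normSq X.trace * (n : ℝ)⁻¹ := by
      rw [h2]; ring
    calc (Φ X * Φ Xᴴ).trace.re
        = Complex.normSq X.trace * (k : ℝ)⁻¹
          + (∑ i, ∑ j, (X * M i).trace * star ((X * M j).trace) * ((A i j : ℝ) : ℂ)).re := by
          rw [hkey, Complex.add_re, h1]
      _ ≤ Complex.normSq X.trace * (k : ℝ)⁻¹
          + α * ∑ i, Complex.normSq ((X * M i).trace) :=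
          add_le_add le_rfl (QB _)
      _ = (1 / k - α / n) * Complex.normSq X.trace + α * (((X * Xᴴ).trace).re) := by
          rw [hsum]
          field_simp
          ring
  -- assemble
  have hre1 : ((ampl ⇑Φ ρ) * (ampl ⇑Φ ρ)).trace.re
      = ∑ a : Fin m, ∑ b : Fin m, (Φ (R a b) * Φ (R b a)).trace.re := by
    rw [L1, Complex.re_sum]
    exact Finset.sum_congr rfl fun a _ => Complex.re_sum _ _
  have hre2 : (ρ * ρ).trace.re
      = ∑ a : Fin m, ∑ b : Fin m, (((R a b) * (R b a)).trace).re := by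
    rw [L2, Complex.re_sum]
    exact Finset.sum_congr rfl fun a _ => Complex.re_sum _ _
  have hre3 : ((ptraceFst ρ) * (ptraceFst ρ)).trace.re
      = ∑ a : Fin m, ∑ b : Fin m, Complex.normSq ((R a b).trace) := by
    rw [L3, Complex.re_sum]
    refine Finset.sum_congr rfl fun a _ => ?_
    rw [Complex.re_sum]
    refine Finset.sum_congr rfl fun b _ => ?_
    rw [htconj a b, Complex.star_def, Complex.mul_conj, Complex.ofReal_re]
  rw [hre1, hre2, hre3]
  calc ∑ a : Fin m, ∑ b : Fin m, (Φ (R a b) * Φ (R b a)).trace.re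
      ≤ ∑ a : Fin m, ∑ b : Fin m, ((1 / k - α / n) * Complex.normSq ((R a b).trace)
          + α * (((R a b) * (R b a)).trace).re) :=
        Finset.sum_le_sum fun a _ => Finset.sum_le_sum fun b _ => main_ab a b
    _ = (1 / k - α / n) * (∑ a : Fin m, ∑ b : Fin m, Complex.normSq ((R a b).trace))
        + α * ∑ a : Fin m, ∑ b : Fin m, (((R a b) * (R b a)).trace).re := by
        simp_rw [Finset.sum_add_distrib, Finset.mul_sum]

end
end

section
/- Let (x_1,y_1), …, (x_k,y_k) be k distinct pairs in ℤ_n × ℤ_n and let Ψ^C: H_n → H_k be the complementary channel [Ψ^C(ρ)]_{l,m} = (1/k)·Tr[W_{x_l,y_l} ρ W_{x_m,y_m}^*] of the channel Ψ(ρ) = (1/k)Σ_{l=1}^{k} W_{x_l,y_l} ρ W_{x_l,y_l}^*. Then ‖A_{Ψ^C}‖_∞ = (n/(2k²))·max_{(a,b) ∈ S_n} N(a,b), and consequently γ(Ψ^C) = 1/k + ((n−1)/(2k²))·max_{(a,b) ∈ S_n} N(a,b). -/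
open scoped Matrix Kronecker BigOperators Classical ComplexOrder
open Filter

noncomputable section

variable {ι κ μ : Type*} [Fintype ι] [DecidableEq ι] [Fintype κ] [DecidableEq κ]
  [Fintype μ] [DecidableEq μ]

set_option linter.unusedSectionVars false
namespace WeylAux

variable (n : ℕ) [NeZero n]

/-- The primitive root `exp(2πi/n)`. -/
def om : ℂ := Complex.exp (2 * Real.pi * Complex.I / n)

lemma npos : 0 < n := Nat.pos_of_ne_zero (NeZero.ne n)

lemma om_pow_n : om n ^ n = 1 := by
  rw [om, ← Complex.exp_nat_mul]
  have hn : (n : ℂ) ≠ 0 := Nat.cast_ne_zero.2 (NeZero.ne n)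
  rw [mul_div_cancel₀ _ hn, Complex.exp_two_pi_mul_I]

lemma om_pow_mod (a : ℕ) : om n ^ a = om n ^ (a % n) := by
  conv_lhs => rw [← Nat.mod_add_div a n, pow_add, pow_mul, om_pow_n, one_pow, mul_one]

lemma om_ne_zero : om n ≠ 0 := Complex.exp_ne_zero _

lemma om_norm : ‖om n‖ = 1 := by
  have : (2 * Real.pi * Complex.I / n) = ((2 * Real.pi / n : ℝ) : ℂ) * Complex.I := by
    push_cast; ring
  rw [om, this, Complex.norm_exp_ofReal_mul_I]

/-- The additive character `t ↦ ω^t.val`. -/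
def ee (t : ZMod n) : ℂ := om n ^ t.val

lemma ee_zero : ee n 0 = 1 := by simp [ee]

lemma ee_norm (t : ZMod n) : ‖ee n t‖ = 1 := by rw [ee, norm_pow, om_norm, one_pow]

lemma ee_ne_zero (t : ZMod n) : ee n t ≠ 0 := pow_ne_zero _ (om_ne_zero n)

lemma ee_add (s t : ZMod n) : ee n (s + t) = ee n s * ee n t := by
  rw [ee, ee, ee, ← pow_add, ZMod.val_add, ← om_pow_mod]

lemma ee_conj (t : ZMod n) : (starRingEnd ℂ) (ee n t) = ee n (-t) := by
  have h1 : ee n t * ee n (-t) = 1 := by rw [← ee_add, add_neg_cancel, ee_zero]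
  have h2 : (starRingEnd ℂ) (ee n t) * ee n t = 1 := by
    rw [mul_comm, Complex.mul_conj]
    norm_cast
    rw [← Complex.sq_norm, ee_norm]; norm_num
  calc (starRingEnd ℂ) (ee n t) = (starRingEnd ℂ) (ee n t) * (ee n t * ee n (-t)) := by
        rw [h1, mul_one]
    _ = ((starRingEnd ℂ) (ee n t) * ee n t) * ee n (-t) := by ring
    _ = ee n (-t) := by rw [h2, one_mul]

lemma sum_val {M : Type*} [AddCommMonoid M] (f : ℕ → M) :
    ∑ j : ZMod n, f j.val = ∑ i ∈ Finset.range n, f i := by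
  refine Finset.sum_nbij' (fun j => j.val) (fun i => (i : ZMod n)) ?_ ?_ ?_ ?_ ?_
  · intro a _; exact Finset.mem_range.2 (ZMod.val_lt a)
  · intro a _; exact Finset.mem_univ _
  · intro a _; exact ZMod.natCast_rightInverse a
  · intro a ha; exact ZMod.val_cast_of_lt (Finset.mem_range.1 ha)
  · intro a _; rfl

lemma sum_ee (t : ZMod n) : ∑ j : ZMod n, ee n (t * j) = if t = 0 then (n : ℂ) else 0 := by
  split_ifs with h
  · subst h; simp [ee_zero, ZMod.card]
  · have key : ∀ j : ZMod n, ee n (t * j) = (om n ^ t.val) ^ j.val := by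
      intro j
      rw [ee, ZMod.val_mul, ← om_pow_mod, pow_mul]
    simp_rw [key]
    rw [sum_val n (fun i => (om n ^ t.val) ^ i)]
    have hne : om n ^ t.val ≠ 1 := by
      have hprim := Complex.isPrimitiveRoot_exp n (NeZero.ne n)
      have := hprim.pow_ne_one_of_pos_of_lt (ZMod.val_pos.2 h).ne' (ZMod.val_lt t)
      exact this
    rw [geom_sum_eq hne]
    have : (om n ^ t.val) ^ n = 1 := by
      rw [← pow_mul, mul_comm, pow_mul, om_pow_n, one_pow]
    rw [this, sub_self, zero_div]


lemma shiftU_pow (m : ℕ) :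
    shiftU n ^ m = Matrix.of fun i j => if i = j + (m : ZMod n) then (1:ℂ) else 0 := by
  induction m with
  | zero => ext i j; simp [Matrix.one_apply]
  | succ m ih =>
    rw [pow_succ, ih]
    ext i j
    rw [Matrix.mul_apply]
    have key : ∀ l : ZMod n, (Matrix.of fun i j => if i = j + (m : ZMod n) then (1:ℂ) else 0) i l
        * shiftU n l j = if l = j + 1 then (if i = l + (m : ZMod n) then (1:ℂ) else 0) else 0 := by
      intro l
      by_cases h : l = j + 1 <;> simp [shiftU, h]
    simp_rw [key]
    rw [Finset.sum_ite_eq' Finset.univ (j+1)]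
    simp only [Finset.mem_univ, if_true, Matrix.of_apply]
    have : (j + 1) + (m : ZMod n) = j + ((m+1 : ℕ) : ZMod n) := by push_cast; ring
    rw [this]

lemma diagV_eq : diagV n = Matrix.diagonal fun j : ZMod n => om n ^ j.val := by
  have h : (fun m : ZMod n => Complex.exp (2 * Real.pi * Complex.I * m.val / n))
      = fun j : ZMod n => om n ^ j.val := by
    funext m
    rw [om, ← Complex.exp_nat_mul]
    congr 1
    ring
  unfold diagV
  rw [h]

lemma Wmat_apply (x y : ZMod n) (i j : ZMod n) :
    Wmat n x y i j = if i = j + x then ee n (y * j) else 0 := by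
  unfold Wmat
  rw [shiftU_pow n x.val, diagV_eq, Matrix.diagonal_pow, Matrix.mul_diagonal]
  have h1 : ((x.val : ℕ) : ZMod n) = x := ZMod.natCast_rightInverse x
  rw [h1]
  have h2 : ((fun j : ZMod n => om n ^ j.val) ^ y.val) j = ee n (y * j) := by
    simp only [Pi.pow_apply]
    rw [← pow_mul, ee, ZMod.val_mul, ← om_pow_mod]
    ring_nf
  rw [h2, Matrix.of_apply, ite_mul, one_mul, zero_mul]

lemma Wmat_mul (x y a b : ZMod n) :
    Wmat n x y * Wmat n a b = ee n (y * a) • Wmat n (x + a) (y + b) := by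
  ext i j
  rw [Matrix.mul_apply]
  have key : ∀ l : ZMod n, Wmat n x y i l * Wmat n a b l j
      = if l = j + a then (if i = l + x then ee n (y * l) * ee n (b * j) else 0) else 0 := by
    intro l
    rw [Wmat_apply, Wmat_apply]
    by_cases h : l = j + a <;> simp [h, mul_ite, ite_mul]
  simp_rw [key]
  rw [Finset.sum_ite_eq' Finset.univ (j+a)]
  simp only [Finset.mem_univ, if_true, Matrix.smul_apply, Wmat_apply, smul_ite, smul_zero]
  by_cases h : i = j + (x + a)
  · have h' : i = j + a + x := by rw [h]; ring
    rw [if_pos h, if_pos h', smul_eq_mul, ← ee_add, ← ee_add]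
    congr 1
    ring
  · have h' : ¬ i = j + a + x := fun hh => h (by rw [hh]; ring)
    rw [if_neg h, if_neg h']

lemma Wmat_conjTranspose (x y : ZMod n) :
    (Wmat n x y)ᴴ = ee n (x * y) • Wmat n (-x) (-y) := by
  ext i j
  rw [Matrix.conjTranspose_apply, Wmat_apply, Matrix.smul_apply, Wmat_apply,
    apply_ite (star : ℂ → ℂ), star_zero]
  by_cases h : i = j + -x
  · have h' : j = i + x := by rw [h]; ring
    rw [if_pos h', if_pos h, smul_eq_mul]
    rw [show (star : ℂ → ℂ) = (starRingEnd ℂ) from rfl, ee_conj, ← ee_add]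
    congr 1
    rw [h]; ring
  · have h' : ¬ j = i + x := fun hh => h (by rw [hh]; ring)
    rw [if_neg h', if_neg h, smul_zero]

lemma trace_Wmat (x y : ZMod n) :
    (Wmat n x y).trace = if x = 0 ∧ y = 0 then (n : ℂ) else 0 := by
  rw [Matrix.trace]
  simp only [Matrix.diag_apply, Wmat_apply]
  by_cases hx : x = 0
  · subst hx
    have h0 : ∀ j : ZMod n, (if j = j + 0 then ee n (y * j) else 0) = ee n (y * j) := by
      intro j; rw [if_pos (by rw [add_zero])]
    simp only [h0]
    rw [sum_ee n y]
    simp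
  · have : ∀ j : ZMod n, (if j = j + x then ee n (y * j) else 0) = 0 := by
      intro j
      rw [if_neg]
      intro hh
      exact hx (left_eq_add.mp hh)
    simp [this, hx]
/-- The Weyl coefficient functional `ρ ↦ Tr[W_q ρ]`. -/
def TT (q : ZMod n × ZMod n) (ρ : Matrix (ZMod n) (ZMod n) ℂ) : ℂ :=
  (Wmat n q.1 q.2 * ρ).trace

lemma TT_apply (q : ZMod n × ZMod n) (ρ : Matrix (ZMod n) (ZMod n) ℂ) :
    TT n q ρ = ∑ i : ZMod n, ee n (q.2 * i) * ρ i (i + q.1) := by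
  unfold TT
  rw [Matrix.trace]
  simp only [Matrix.diag_apply, Matrix.mul_apply, Wmat_apply]
  rw [Finset.sum_comm]
  apply Finset.sum_congr rfl
  intro i _
  simp only [ite_mul, zero_mul]
  rw [Finset.sum_ite_eq' Finset.univ (i + q.1) (fun j => ee n (q.2 * i) * ρ i j)]
  simp

lemma mul_conj_re (z : ℂ) : (z * (starRingEnd ℂ) z).re = ‖z‖^2 := by
  rw [Complex.mul_conj]
  norm_cast
  rw [Complex.sq_norm]

lemma parseval_complex (ρ : Matrix (ZMod n) (ZMod n) ℂ) :
    ∑ q : ZMod n × ZMod n, TT n q ρ * (starRingEnd ℂ) (TT n q ρ)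
      = (n : ℂ) * ∑ i : ZMod n, ∑ j : ZMod n, ρ i j * (starRingEnd ℂ) (ρ i j) := by
  rw [Fintype.sum_prod_type]
  have hx : ∀ x : ZMod n, ∑ y : ZMod n, TT n (x, y) ρ * (starRingEnd ℂ) (TT n (x, y) ρ)
      = (n : ℂ) * ∑ i : ZMod n, ρ i (i + x) * (starRingEnd ℂ) (ρ i (i + x)) := by
    intro x
    have expand : ∀ y : ZMod n, TT n (x, y) ρ * (starRingEnd ℂ) (TT n (x, y) ρ)
        = ∑ i : ZMod n, ∑ i' : ZMod n,
            ee n (y * (i - i')) * (ρ i (i + x) * (starRingEnd ℂ) (ρ i' (i' + x))) := by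
      intro y
      rw [TT_apply, map_sum, Finset.sum_mul_sum]
      apply Finset.sum_congr rfl
      intro i _
      apply Finset.sum_congr rfl
      intro i' _
      rw [map_mul, ee_conj]
      have h : ee n (y * (i - i')) = ee n (y * i) * ee n (-(y * i')) := by
        rw [← ee_add]; congr 1; ring
      rw [h]; ring
    simp_rw [expand]
    rw [Finset.sum_comm]
    have swap2 : ∀ i : ZMod n,
        (∑ y : ZMod n, ∑ i' : ZMod n,
          ee n (y * (i - i')) * (ρ i (i + x) * (starRingEnd ℂ) (ρ i' (i' + x))))
        = ∑ i' : ZMod n, ∑ y : ZMod n,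
          ee n (y * (i - i')) * (ρ i (i + x) * (starRingEnd ℂ) (ρ i' (i' + x))) := by
      intro i; exact Finset.sum_comm
    simp_rw [swap2]
    have inner : ∀ i i' : ZMod n,
        (∑ y : ZMod n, ee n (y * (i - i')) * (ρ i (i + x) * (starRingEnd ℂ) (ρ i' (i' + x))))
        = (if i' = i then (n : ℂ) else 0) * (ρ i (i + x) * (starRingEnd ℂ) (ρ i' (i' + x))) := by
      intro i i'
      rw [← Finset.sum_mul]
      congr 1
      have : ∀ y : ZMod n, ee n (y * (i - i')) = ee n ((i - i') * y) := by
        intro y; rw [mul_comm]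
      simp_rw [this]
      rw [sum_ee n (i - i')]
      congr 1
      rw [sub_eq_zero, eq_comm]
      simp [eq_comm]
    simp_rw [inner]
    rw [Finset.mul_sum]
    apply Finset.sum_congr rfl
    intro i _
    simp only [ite_mul, zero_mul]
    rw [Finset.sum_ite_eq' Finset.univ i]
    simp
  simp_rw [hx]
  rw [← Finset.mul_sum]
  congr 1
  rw [Finset.sum_comm]
  apply Finset.sum_congr rfl
  intro i _
  exact Equiv.sum_comp (Equiv.addLeft i) (fun j => ρ i j * (starRingEnd ℂ) (ρ i j))

lemma parseval (ρ : Matrix (ZMod n) (ZMod n) ℂ) :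
    ∑ q : ZMod n × ZMod n, ‖TT n q ρ‖^2
      = (n : ℝ) * ∑ i : ZMod n, ∑ j : ZMod n, ‖ρ i j‖^2 := by
  have h := congrArg Complex.re (parseval_complex n ρ)
  rw [Complex.re_sum] at h
  simp_rw [mul_conj_re] at h
  rw [show ((n : ℂ)) = ((n : ℝ) : ℂ) by norm_cast, Complex.re_ofReal_mul, Complex.re_sum] at h
  simp_rw [Complex.re_sum, mul_conj_re] at h
  exact h

lemma TT_conj {ρ : Matrix (ZMod n) (ZMod n) ℂ} (hρ : ρ.IsHermitian) (q : ZMod n × ZMod n) :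
    (starRingEnd ℂ) (TT n q ρ) = ee n (q.1 * q.2) * TT n (-q.1, -q.2) ρ := by
  unfold TT
  have h1 : (starRingEnd ℂ) ((Wmat n q.1 q.2 * ρ).trace) = ((Wmat n q.1 q.2 * ρ)ᴴ).trace := by
    rw [Matrix.trace_conjTranspose]; rfl
  rw [h1, Matrix.conjTranspose_mul, hρ.eq, Matrix.trace_mul_comm, Wmat_conjTranspose,
    Matrix.smul_mul, Matrix.trace_smul, smul_eq_mul]

lemma norm_TT_neg {ρ : Matrix (ZMod n) (ZMod n) ℂ} (hρ : ρ.IsHermitian) (q : ZMod n × ZMod n) :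
    ‖TT n (-q.1, -q.2) ρ‖ = ‖TT n q ρ‖ := by
  have h := congrArg norm (TT_conj n hρ q)
  rw [norm_mul, ee_norm, one_mul, RCLike.norm_conj] at h
  exact h.symm

lemma TT_zero (ρ : Matrix (ZMod n) (ZMod n) ℂ) : TT n (0, 0) ρ = ρ.trace := by
  unfold TT
  have : Wmat n 0 0 = 1 := by
    unfold Wmat
    simp [ZMod.val_zero]
  rw [this, one_mul]
lemma weylS_ne_zero {q : ZMod n × ZMod n} (hq : q ∈ weylS n) : q ≠ 0 := by
  intro h
  subst h
  simp only [weylS, Set.mem_setOf_eq, Prod.fst_zero, Prod.snd_zero, ZMod.val_zero] at hq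
  omega

lemma weylS_rep (hn : 2 ≤ n) {q : ZMod n × ZMod n} (hq : q ≠ 0) :
    q ∈ weylS n ∨ (-q.1, -q.2) ∈ weylS n := by
  simp only [weylS, Set.mem_setOf_eq]
  have hlt1 : q.1.val < n := ZMod.val_lt q.1
  have hlt2 : q.2.val < n := ZMod.val_lt q.2
  by_cases ha : q.1 = 0
  · have hb : q.2 ≠ 0 := fun h => hq (Prod.ext_iff.2 ⟨ha, h⟩)
    by_cases hb2 : q.2.val ≤ n / 2
    · exact Or.inl (Or.inr (Or.inr (Or.inl ⟨ha, ZMod.val_pos.2 hb, hb2⟩)))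
    · refine Or.inr (Or.inr (Or.inr (Or.inl ⟨by rw [ha, neg_zero], ?_, ?_⟩)))
      · exact ZMod.val_pos.2 (neg_ne_zero.2 hb)
      · rw [ZMod.neg_val, if_neg hb]; omega
  · by_cases hb : q.2 = 0
    · by_cases ha2 : q.1.val ≤ n / 2
      · exact Or.inl (Or.inr (Or.inr (Or.inr ⟨hb, ZMod.val_pos.2 ha, ha2⟩)))
      · refine Or.inr (Or.inr (Or.inr (Or.inr ⟨by rw [hb, neg_zero], ?_, ?_⟩)))
        · exact ZMod.val_pos.2 (neg_ne_zero.2 ha)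
        · rw [ZMod.neg_val, if_neg ha]; omega
    · rcases lt_trichotomy q.1.val q.2.val with h | h | h
      · exact Or.inl (Or.inl ⟨ZMod.val_pos.2 ha, h⟩)
      · have heq : q.1 = q.2 := ZMod.val_injective n h
        by_cases hle : q.1.val ≤ n / 2
        · exact Or.inl (Or.inr (Or.inl ⟨heq, ZMod.val_pos.2 ha, hle⟩))
        · refine Or.inr (Or.inr (Or.inl ⟨by rw [heq], ?_, ?_⟩))
          · exact ZMod.val_pos.2 (neg_ne_zero.2 ha)
          · rw [ZMod.neg_val, if_neg ha]; omega
      · refine Or.inr (Or.inl ⟨?_, ?_⟩)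
        · exact ZMod.val_pos.2 (neg_ne_zero.2 ha)
        · rw [ZMod.neg_val, if_neg ha, ZMod.neg_val, if_neg hb]
          have h1 : 0 < q.1.val := ZMod.val_pos.2 ha
          have h2 : 0 < q.2.val := ZMod.val_pos.2 hb
          omega

lemma zero_one_mem (hn : 2 ≤ n) : ((0 : ZMod n), (1 : ZMod n)) ∈ weylS n := by
  haveI : Fact (1 < n) := ⟨by omega⟩
  refine Or.inr (Or.inr (Or.inl ⟨rfl, ?_, ?_⟩))
  · rw [ZMod.val_one]
  · rw [ZMod.val_one]; omega

lemma card_shift_le (k : ℕ) (w : Fin k → ZMod n × ZMod n) (hw : Function.Injective w)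
    (v : ZMod n × ZMod n) :
    (Finset.univ.filter fun lm : Fin k × Fin k =>
        ((w lm.2).1 - (w lm.1).1, (w lm.2).2 - (w lm.1).2) = v).card ≤ k := by
  have h : (Finset.univ.filter fun lm : Fin k × Fin k =>
        ((w lm.2).1 - (w lm.1).1, (w lm.2).2 - (w lm.1).2) = v).card
      ≤ (Finset.univ : Finset (Fin k)).card := by
    apply Finset.card_le_card_of_injOn (fun lm : Fin k × Fin k => lm.1)
      (fun a _ => Finset.mem_univ a.1)
    intro a ha b hb hab
    simp only [Finset.coe_filter, Set.mem_setOf_eq] at ha hb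
    have h2 : w a.2 = w b.2 := by
      have e1 := ha.2
      have e2 := hb.2
      rw [Prod.ext_iff] at e1 e2
      have : w a.2 = (v.1 + (w a.1).1, v.2 + (w a.1).2) := by
        rw [Prod.ext_iff]
        constructor
        · have := e1.1; simp only at this; linear_combination this
        · have := e1.2; simp only at this; linear_combination this
      have hbb : w b.2 = (v.1 + (w b.1).1, v.2 + (w b.1).2) := by
        rw [Prod.ext_iff]
        constructor
        · have := e2.1; simp only at this; linear_combination this
        · have := e2.2; simp only at this; linear_combination this
      rw [this, hbb]
      have hab2 : a.1 = b.1 := hab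
      rw [hab2]
    exact Prod.ext_iff.2 ⟨hab, hw h2⟩
  simpa using h

lemma sum_comp_fiber {α β M : Type*} [Fintype α] [Fintype β] [DecidableEq β] [AddCommMonoid M]
    (g : α → β) (F : β → M) :
    ∑ a : α, F (g a) = ∑ b : β, (Finset.univ.filter fun a => g a = b).card • F b := by
  have h := Finset.sum_fiberwise_eq_sum_filter Finset.univ Finset.univ g (fun a => F (g a))
  simp only [Finset.mem_univ, Finset.filter_true] at h
  rw [← h]
  apply Finset.sum_congr rfl
  intro b _
  rw [Finset.sum_congr rfl (fun a ha => by rw [(Finset.mem_filter.1 ha).2]),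
    Finset.sum_const]
lemma clm_norm_eq_of_quadratic {N : ℕ}
    (T : EuclideanSpace ℝ (Fin N) →L[ℝ] EuclideanSpace ℝ (Fin N)) (t : ℝ)
    (symm : ∀ x y : EuclideanSpace ℝ (Fin N), (inner ℝ (T x) y : ℝ) = inner ℝ x (T y))
    (pos : ∀ x : EuclideanSpace ℝ (Fin N), (0:ℝ) ≤ inner ℝ x (T x))
    (bound : ∀ x : EuclideanSpace ℝ (Fin N), (inner ℝ x (T x) : ℝ) ≤ t * inner ℝ x x)
    (ex : ∃ x : EuclideanSpace ℝ (Fin N), (inner ℝ x x : ℝ) = 1 ∧ (inner ℝ x (T x) : ℝ) = t) :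
    ‖T‖ = t := by
  obtain ⟨x₀, hx1, hx2⟩ := ex
  have ht : 0 ≤ t := hx2 ▸ pos x₀
  have expand : ∀ (x y : EuclideanSpace ℝ (Fin N)) (r : ℝ),
      (inner ℝ (x + r • y) (T (x + r • y)) : ℝ)
        = (inner ℝ y (T y) : ℝ) * r^2 + (2 * (inner ℝ x (T y) : ℝ)) * r + inner ℝ x (T x) := by
    intro x y r
    rw [map_add, map_smul, inner_add_left, inner_add_right, inner_add_right,
      real_inner_smul_left, real_inner_smul_left, real_inner_smul_right, real_inner_smul_right]
    have hyx : (inner ℝ y (T x) : ℝ) = inner ℝ x (T y) := by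
      rw [real_inner_comm]; exact symm x y
    rw [hyx]
    ring
  have CS : ∀ x y : EuclideanSpace ℝ (Fin N),
      (inner ℝ x (T y) : ℝ)^2 ≤ (inner ℝ x (T x) : ℝ) * (inner ℝ y (T y) : ℝ) := by
    intro x y
    have key : ∀ r : ℝ, 0 ≤ (inner ℝ y (T y) : ℝ) * (r * r) + (2 * (inner ℝ x (T y) : ℝ)) * r
        + (inner ℝ x (T x) : ℝ) := by
      intro r
      have h := pos (x + r • y)
      rw [expand x y r] at h
      calc (0:ℝ) ≤ _ := h
        _ = (inner ℝ y (T y) : ℝ) * (r * r) + (2 * (inner ℝ x (T y) : ℝ)) * r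
            + (inner ℝ x (T x) : ℝ) := by ring
    have hd := discrim_le_zero key
    rw [discrim] at hd
    nlinarith [hd]
  have hle : ‖T‖ ≤ t := by
    apply ContinuousLinearMap.opNorm_le_bound T ht
    intro x
    by_cases h0 : ‖T x‖ = 0
    · rw [h0]; positivity
    · have hTx : 0 < ‖T x‖ := lt_of_le_of_ne (norm_nonneg _) (Ne.symm h0)
      have h1 : ‖T x‖^2 = (inner ℝ x (T (T x)) : ℝ) := by
        rw [← symm x (T x), real_inner_self_eq_norm_sq]
      have h2 : (‖T x‖^2)^2 ≤ (t * ‖x‖^2) * (t * ‖T x‖^2) := by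
        calc (‖T x‖^2)^2 = (inner ℝ x (T (T x)) : ℝ)^2 := by rw [h1]
          _ ≤ (inner ℝ x (T x) : ℝ) * (inner ℝ (T x) (T (T x)) : ℝ) := CS x (T x)
          _ ≤ (t * ‖x‖^2) * (t * ‖T x‖^2) := by
              apply mul_le_mul
              · calc (inner ℝ x (T x) : ℝ) ≤ t * inner ℝ x x := bound x
                  _ = t * ‖x‖^2 := by rw [real_inner_self_eq_norm_sq]
              · calc (inner ℝ (T x) (T (T x)) : ℝ) ≤ t * inner ℝ (T x) (T x) := bound (T x)
                  _ = t * ‖T x‖^2 := by rw [real_inner_self_eq_norm_sq]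
              · exact pos (T x)
              · positivity
      have h3 : ‖T x‖^2 ≤ (t * ‖x‖)^2 := by
        have hq : ‖T x‖^2 * ‖T x‖^2 ≤ (t^2 * ‖x‖^2) * ‖T x‖^2 := by nlinarith [h2]
        have := (mul_le_mul_iff_of_pos_right (by positivity : (0:ℝ) < ‖T x‖^2)).1 hq
        calc ‖T x‖^2 ≤ t^2 * ‖x‖^2 := this
          _ = (t * ‖x‖)^2 := by ring
      have h4 := Real.sqrt_le_sqrt h3
      rw [Real.sqrt_sq (norm_nonneg _), Real.sqrt_sq (by positivity)] at h4
      exact h4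
  have hge : t ≤ ‖T‖ := by
    have hn : ‖x₀‖ = 1 := by
      have : ‖x₀‖^2 = 1 := by rw [← real_inner_self_eq_norm_sq]; exact hx1
      nlinarith [norm_nonneg x₀]
    calc t = (inner ℝ x₀ (T x₀) : ℝ) := hx2.symm
      _ ≤ ‖x₀‖ * ‖T x₀‖ := real_inner_le_norm _ _
      _ = ‖T x₀‖ := by rw [hn, one_mul]
      _ ≤ ‖T‖ * ‖x₀‖ := T.le_opNorm x₀
      _ = ‖T‖ := by rw [hn, mul_one]
  linarith
lemma inner_toEuclideanCLM {N : ℕ} (A : Matrix (Fin N) (Fin N) ℝ)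
    (x y : EuclideanSpace ℝ (Fin N)) :
    (inner ℝ x (Matrix.toEuclideanCLM (𝕜 := ℝ) A y) : ℝ) = ∑ i, ∑ j, x i * A i j * y j := by
  have happ : ∀ i, (Matrix.toEuclideanCLM (𝕜 := ℝ) A y) i = ∑ j, A i j * y j := by
    intro i
    have h2 := congrFun (Matrix.ofLp_toEuclideanCLM (𝕜 := ℝ) A y) i
    simpa [Matrix.mulVec, dotProduct] using h2
  rw [PiLp.inner_apply]
  simp_rw [happ, RCLike.inner_apply, starRingEnd_apply, star_trivial]
  apply Finset.sum_congr rfl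
  intro i _
  rw [Finset.sum_mul]
  apply Finset.sum_congr rfl
  intro j _
  ring
section Channel

variable {k : ℕ} (w : Fin k → ZMod n × ZMod n)
  (ΨC : Matrix (ZMod n) (ZMod n) ℂ → Matrix (Fin k) (Fin k) ℂ)

lemma trace_WrhoW (ρ : Matrix (ZMod n) (ZMod n) ℂ) (l m : Fin k) :
    (Wmat n (w l).1 (w l).2 * ρ * (Wmat n (w m).1 (w m).2)ᴴ).trace
      = (ee n ((w m).1 * (w m).2) * ee n (-(w m).2 * (w l).1))
        * TT n ((w l).1 - (w m).1, (w l).2 - (w m).2) ρ := by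
  rw [Matrix.trace_mul_comm, Wmat_conjTranspose, Matrix.smul_mul, Matrix.trace_smul,
    ← Matrix.mul_assoc, Wmat_mul, Matrix.smul_mul, Matrix.trace_smul]
  rw [smul_eq_mul, smul_eq_mul, ← mul_assoc, neg_add_eq_sub, neg_add_eq_sub]
  rfl

lemma psiC_entry_norm
    (hΨC : ∀ ρ l m, ΨC ρ l m =
      (1 / (k : ℂ)) * (Wmat n (w l).1 (w l).2 * ρ * (Wmat n (w m).1 (w m).2)ᴴ).trace)
    (ρ : Matrix (ZMod n) (ZMod n) ℂ) (l m : Fin k) :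
    ‖ΨC ρ l m‖ = (1 / (k : ℝ)) * ‖TT n ((w l).1 - (w m).1, (w l).2 - (w m).2) ρ‖ := by
  rw [hΨC, trace_WrhoW, norm_mul, norm_mul, norm_mul, ee_norm, ee_norm]
  simp [Complex.norm_natCast]

lemma psiC_herm
    (hΨC : ∀ ρ l m, ΨC ρ l m =
      (1 / (k : ℂ)) * (Wmat n (w l).1 (w l).2 * ρ * (Wmat n (w m).1 (w m).2)ᴴ).trace)
    {ρ : Matrix (ZMod n) (ZMod n) ℂ} (hρ : ρ.IsHermitian) : (ΨC ρ).IsHermitian := by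
  rw [Matrix.IsHermitian]
  ext l m
  rw [Matrix.conjTranspose_apply, hΨC ρ m l, hΨC ρ l m]
  rw [star_mul']
  have h1 : star ((1:ℂ) / (k:ℂ)) = (1:ℂ) / (k:ℂ) := by
    rw [star_div₀, star_one, star_natCast]
  have h2 : star ((Wmat n (w m).1 (w m).2 * ρ * (Wmat n (w l).1 (w l).2)ᴴ).trace)
      = (Wmat n (w l).1 (w l).2 * ρ * (Wmat n (w m).1 (w m).2)ᴴ).trace := by
    rw [← Matrix.trace_conjTranspose, Matrix.conjTranspose_mul, Matrix.conjTranspose_mul,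
      Matrix.conjTranspose_conjTranspose, hρ.eq, ← Matrix.mul_assoc]
  rw [h1, h2, mul_comm]

lemma psiC_linear
    (hΨC : ∀ ρ l m, ΨC ρ l m =
      (1 / (k : ℂ)) * (Wmat n (w l).1 (w l).2 * ρ * (Wmat n (w m).1 (w m).2)ᴴ).trace)
    {J : ℕ} (c : Fin J → ℝ) (M : Fin J → Matrix (ZMod n) (ZMod n) ℂ) (l m : Fin k) :
    ΨC (∑ i, (c i : ℂ) • M i) l m = ∑ i, (c i : ℂ) * ΨC (M i) l m := by
  rw [hΨC]
  have expand : Wmat n (w l).1 (w l).2 * (∑ i, (c i : ℂ) • M i) * (Wmat n (w m).1 (w m).2)ᴴ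
      = ∑ i, (c i : ℂ) • (Wmat n (w l).1 (w l).2 * M i * (Wmat n (w m).1 (w m).2)ᴴ) := by
    rw [Finset.mul_sum, Finset.sum_mul]
    apply Finset.sum_congr rfl
    intro i _
    rw [Matrix.mul_smul, Matrix.smul_mul]
  rw [expand, Matrix.trace_sum, Finset.mul_sum]
  apply Finset.sum_congr rfl
  intro i _
  rw [Matrix.trace_smul, hΨC, smul_eq_mul]
  ring

lemma psiC_form
    (hΨC : ∀ ρ l m, ΨC ρ l m =
      (1 / (k : ℂ)) * (Wmat n (w l).1 (w l).2 * ρ * (Wmat n (w m).1 (w m).2)ᴴ).trace)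
    {ρ : Matrix (ZMod n) (ZMod n) ℂ} (hρ : ρ.IsHermitian) :
    ((ΨC ρ * ΨC ρ).trace).re
      = (1/(k:ℝ)^2) * ∑ lm : Fin k × Fin k,
          ‖TT n ((w lm.1).1 - (w lm.2).1, (w lm.1).2 - (w lm.2).2) ρ‖^2 := by
  have hP := psiC_herm n w ΨC hΨC hρ
  have h1 : (ΨC ρ * ΨC ρ).trace = ∑ l, ∑ m, ΨC ρ l m * star (ΨC ρ l m) := by
    rw [Matrix.trace]
    apply Finset.sum_congr rfl
    intro l _
    rw [Matrix.diag_apply, Matrix.mul_apply]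
    apply Finset.sum_congr rfl
    intro m _
    congr 1
    exact (hP.apply m l).symm
  rw [h1, Complex.re_sum]
  simp_rw [Complex.re_sum]
  have h2 : ∀ l m : Fin k, (ΨC ρ l m * star (ΨC ρ l m)).re = ‖ΨC ρ l m‖^2 := fun l m =>
    mul_conj_re _
  simp_rw [h2, psiC_entry_norm n w ΨC hΨC, mul_pow, Fintype.sum_prod_type]
  rw [Finset.mul_sum]
  apply Finset.sum_congr rfl
  intro l _
  rw [Finset.mul_sum]
  apply Finset.sum_congr rfl
  intro m _
  rw [div_pow, one_pow]

end Channel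
lemma trace_mul_eq {ι : Type*} [Fintype ι] (A B : Matrix ι ι ℂ) :
    (A * B).trace = ∑ i, ∑ j, A i j * B j i := by
  rw [Matrix.trace]
  apply Finset.sum_congr rfl
  intro i _
  rw [Matrix.diag_apply, Matrix.mul_apply]

lemma frob_herm {ι : Type*} [Fintype ι] {τ : Matrix ι ι ℂ} (hτ : τ.IsHermitian) :
    ((τ * τ).trace).re = ∑ i, ∑ j, ‖τ i j‖^2 := by
  rw [trace_mul_eq, Complex.re_sum]
  apply Finset.sum_congr rfl
  intro i _
  rw [Complex.re_sum]
  apply Finset.sum_congr rfl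
  intro j _
  rw [show τ j i = star (τ i j) from (hτ.apply j i).symm]
  exact mul_conj_re _

lemma neg_pair (q : ZMod n × ZMod n) : (-q.1, -q.2) = -q := by
  rw [Prod.ext_iff]; simp

lemma form_regroup {k : ℕ} (w : Fin k → ZMod n × ZMod n)
    {ρ : Matrix (ZMod n) (ZMod n) ℂ} (hρ : ρ.IsHermitian) :
    2 * ∑ lm : Fin k × Fin k,
        ‖TT n ((w lm.1).1 - (w lm.2).1, (w lm.1).2 - (w lm.2).2) ρ‖^2
    = ∑ q : ZMod n × ZMod n,
        ((((Finset.univ.filter fun lm : Fin k × Fin k =>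
            ((w lm.2).1 - (w lm.1).1, (w lm.2).2 - (w lm.1).2) = q).card
          + (Finset.univ.filter fun lm : Fin k × Fin k =>
            ((w lm.2).1 - (w lm.1).1, (w lm.2).2 - (w lm.1).2) = (-q.1, -q.2)).card : ℕ) : ℝ))
          * ‖TT n q ρ‖^2 := by
  set g : Fin k × Fin k → ZMod n × ZMod n :=
    fun lm => ((w lm.2).1 - (w lm.1).1, (w lm.2).2 - (w lm.1).2) with hg
  set F : ZMod n × ZMod n → ℝ := fun v => ‖TT n v ρ‖^2 with hF
  set C : ZMod n × ZMod n → ℕ :=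
    fun v => (Finset.univ.filter fun lm => g lm = v).card with hC
  have hFneg : ∀ v : ZMod n × ZMod n, F (-v) = F v := by
    intro v
    have := norm_TT_neg n hρ v
    rw [hF]
    simp only []
    rw [show (-v) = (-v.1, -v.2) from (neg_pair n v).symm, this]
  have step1 : ∀ lm : Fin k × Fin k,
      ‖TT n ((w lm.1).1 - (w lm.2).1, (w lm.1).2 - (w lm.2).2) ρ‖^2 = F (g lm) := by
    intro lm
    have h1 : ((w lm.1).1 - (w lm.2).1, (w lm.1).2 - (w lm.2).2) = -(g lm) := by
      rw [hg]
      simp only []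
      rw [Prod.ext_iff]
      simp [neg_sub]
    rw [h1]
    exact hFneg (g lm)
  simp_rw [step1]
  rw [sum_comp_fiber g F]
  have step2 : ∑ v : ZMod n × ZMod n, C (-v) • F v = ∑ v : ZMod n × ZMod n, C v • F v := by
    have h := Equiv.sum_comp (Equiv.neg (ZMod n × ZMod n)) (fun v => C v • F v)
    calc ∑ v : ZMod n × ZMod n, C (-v) • F v
        = ∑ v : ZMod n × ZMod n, C ((Equiv.neg _) v) • F ((Equiv.neg _) v) := by
          apply Finset.sum_congr rfl
          intro v _
          rw [show ((Equiv.neg (ZMod n × ZMod n)) v) = -v from rfl, hFneg]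
      _ = ∑ v : ZMod n × ZMod n, C v • F v := h
  have expand : ∀ v : ZMod n × ZMod n,
      ((((Finset.univ.filter fun lm : Fin k × Fin k => g lm = v).card
        + (Finset.univ.filter fun lm : Fin k × Fin k => g lm = (-v.1, -v.2)).card : ℕ) : ℝ))
        * F v = (C v • F v) + (C (-v) • F v) := by
    intro v
    rw [nsmul_eq_mul, nsmul_eq_mul, hC]
    simp only []
    rw [show ((-v.1, -v.2) : ZMod n × ZMod n) = -v from neg_pair n v]
    push_cast
    ring
  change _ = ∑ q : ZMod n × ZMod n,
    ((((Finset.univ.filter fun lm : Fin k × Fin k => g lm = q).card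
      + (Finset.univ.filter fun lm : Fin k × Fin k => g lm = (-q.1, -q.2)).card : ℕ) : ℝ))
      * F q
  simp_rw [expand]
  rw [Finset.sum_add_distrib, step2]
  simp_rw [nsmul_eq_mul]
  ring
section Basis

variable {J : ℕ} (M : Fin J → Matrix (ZMod n) (ZMod n) ℂ)

lemma herm_rhox (hMherm : ∀ i, (M i).IsHermitian) (x : Fin J → ℝ) :
    (∑ i, ((x i : ℝ) : ℂ) • M i).IsHermitian := by
  rw [Matrix.IsHermitian, Matrix.conjTranspose_sum]
  apply Finset.sum_congr rfl
  intro i _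
  rw [Matrix.conjTranspose_smul, (hMherm i).eq, Complex.star_def, Complex.conj_ofReal]

lemma trace_rhox (hMtr : ∀ i, (M i).trace = 0) (x : Fin J → ℝ) :
    (∑ i, ((x i : ℝ) : ℂ) • M i).trace = 0 := by
  rw [Matrix.trace_sum]
  apply Finset.sum_eq_zero
  intro i _
  rw [Matrix.trace_smul, hMtr i, smul_zero]

lemma mul_trace_rhox (hMorth : ∀ i j, ((M i) * (M j)).trace = if i = j then 1 else 0)
    (x : Fin J → ℝ) :
    ((∑ i, ((x i : ℝ):ℂ) • M i) * (∑ i, ((x i : ℝ):ℂ) • M i)).trace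
      = (((∑ i, (x i)^2 : ℝ)) : ℂ) := by
  rw [Finset.sum_mul_sum, Matrix.trace_sum]
  have key : ∀ a b : Fin J, ((((x a:ℝ):ℂ) • M a) * (((x b:ℝ):ℂ) • M b)).trace
      = if b = a then ((((x a)^2 : ℝ)) : ℂ) else 0 := by
    intro a b
    rw [Matrix.smul_mul, Matrix.mul_smul, Matrix.trace_smul, Matrix.trace_smul, hMorth a b]
    by_cases h : b = a
    · subst h
      simp only [if_pos rfl, smul_eq_mul, mul_one]
      push_cast
      ring
    · have h' : ¬ a = b := fun hh => h hh.symm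
      simp [h, h']
  calc ∑ a, (∑ b, ((((x a:ℝ):ℂ) • M a) * (((x b:ℝ):ℂ) • M b))).trace
      = ∑ a, ∑ b, (if b = a then ((((x a)^2 : ℝ)) : ℂ) else 0) := by
        apply Finset.sum_congr rfl
        intro a _
        rw [Matrix.trace_sum]
        exact Finset.sum_congr rfl fun b _ => key a b
    _ = ∑ a, ((((x a)^2 : ℝ)) : ℂ) := by
        apply Finset.sum_congr rfl
        intro a _
        rw [Finset.sum_ite_eq' Finset.univ a]
        simp
    _ = (((∑ i, (x i)^2 : ℝ)) : ℂ) := by push_cast; rfl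

lemma frob_rhox (hMherm : ∀ i, (M i).IsHermitian)
    (hMorth : ∀ i j, ((M i) * (M j)).trace = if i = j then 1 else 0) (x : Fin J → ℝ) :
    ∑ a : ZMod n, ∑ b : ZMod n, ‖(∑ i, ((x i : ℝ):ℂ) • M i) a b‖^2 = ∑ i, (x i)^2 := by
  rw [← frob_herm (herm_rhox n M hMherm x), mul_trace_rhox n M hMorth x, Complex.ofReal_re]

lemma form_expand {k : ℕ} (w : Fin k → ZMod n × ZMod n)
    (ΨC : Matrix (ZMod n) (ZMod n) ℂ → Matrix (Fin k) (Fin k) ℂ)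
    (hΨC : ∀ ρ l m, ΨC ρ l m =
      (1 / (k : ℂ)) * (Wmat n (w l).1 (w l).2 * ρ * (Wmat n (w m).1 (w m).2)ᴴ).trace)
    (x : Fin J → ℝ) :
    ((ΨC (∑ i, ((x i:ℝ):ℂ) • M i) * ΨC (∑ i, ((x i:ℝ):ℂ) • M i)).trace).re
      = ∑ a, ∑ b, x a * x b * ((ΨC (M a) * ΨC (M b)).trace).re := by
  have hmat : ΨC (∑ i, ((x i:ℝ):ℂ) • M i) = ∑ i, ((x i:ℝ):ℂ) • ΨC (M i) := by
    ext l m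
    rw [psiC_linear n w ΨC hΨC x M l m, Matrix.sum_apply]
    apply Finset.sum_congr rfl
    intro i _
    rw [Matrix.smul_apply, smul_eq_mul]
  rw [hmat, Finset.sum_mul_sum, Matrix.trace_sum, Complex.re_sum]
  apply Finset.sum_congr rfl
  intro a _
  rw [Matrix.trace_sum, Complex.re_sum]
  apply Finset.sum_congr rfl
  intro b _
  rw [Matrix.smul_mul, Matrix.mul_smul, Matrix.trace_smul, Matrix.trace_smul,
    smul_eq_mul, smul_eq_mul, ← mul_assoc,
    show ((x a:ℝ):ℂ) * ((x b:ℝ):ℂ) = (((x a * x b : ℝ)):ℂ) by push_cast; ring,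
    Complex.re_ofReal_mul]

end Basis

lemma form_value {k : ℕ} (w : Fin k → ZMod n × ZMod n)
    (ΨC : Matrix (ZMod n) (ZMod n) ℂ → Matrix (Fin k) (Fin k) ℂ)
    (hΨC : ∀ ρ l m, ΨC ρ l m =
      (1 / (k : ℂ)) * (Wmat n (w l).1 (w l).2 * ρ * (Wmat n (w m).1 (w m).2)ᴴ).trace)
    (Nab : ZMod n × ZMod n → ℕ)
    (hNab : ∀ q, Nab q =
      (Finset.univ.filter fun lm : Fin k × Fin k =>
        ((w lm.2).1 - (w lm.1).1, (w lm.2).2 - (w lm.1).2) = q).card +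
      (Finset.univ.filter fun lm : Fin k × Fin k =>
        ((w lm.2).1 - (w lm.1).1, (w lm.2).2 - (w lm.1).2) = (-q.1, -q.2)).card)
    {ρ : Matrix (ZMod n) (ZMod n) ℂ} (hρ : ρ.IsHermitian) :
    ((ΨC ρ * ΨC ρ).trace).re
      = (1/(2*(k:ℝ)^2)) * ∑ q : ZMod n × ZMod n, (Nab q : ℝ) * ‖TT n q ρ‖^2 := by
  rw [psiC_form n w ΨC hΨC hρ]
  have h := form_regroup n w hρ
  calc (1/(k:ℝ)^2) * ∑ lm : Fin k × Fin k,
        ‖TT n ((w lm.1).1 - (w lm.2).1, (w lm.1).2 - (w lm.2).2) ρ‖^2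
      = (1/(2*(k:ℝ)^2)) * (2 * ∑ lm : Fin k × Fin k,
          ‖TT n ((w lm.1).1 - (w lm.2).1, (w lm.1).2 - (w lm.2).2) ρ‖^2) := by ring
    _ = (1/(2*(k:ℝ)^2)) * ∑ q : ZMod n × ZMod n,
        ((((Finset.univ.filter fun lm : Fin k × Fin k =>
            ((w lm.2).1 - (w lm.1).1, (w lm.2).2 - (w lm.1).2) = q).card
          + (Finset.univ.filter fun lm : Fin k × Fin k =>
            ((w lm.2).1 - (w lm.1).1, (w lm.2).2 - (w lm.1).2) = (-q.1, -q.2)).card : ℕ) : ℝ))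
          * ‖TT n q ρ‖^2 := by rw [h]
    _ = (1/(2*(k:ℝ)^2)) * ∑ q : ZMod n × ZMod n, (Nab q : ℝ) * ‖TT n q ρ‖^2 := by
        congr 1
        apply Finset.sum_congr rfl
        intro q _
        congr 1
        rw [hNab q]

lemma exists_extremal (hn : 2 ≤ n) {q₀ : ZMod n × ZMod n} (hq₀ : q₀ ≠ 0) :
    ∃ ρ : Matrix (ZMod n) (ZMod n) ℂ, ρ.IsHermitian ∧ ρ.trace = 0 ∧
      (∑ a : ZMod n, ∑ b : ZMod n, ‖ρ a b‖^2 = 1) ∧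
      (∀ q : ZMod n × ZMod n, q ≠ q₀ → q ≠ (-q₀.1, -q₀.2) → TT n q ρ = 0) := by
  classical
  set W := Wmat n q₀.1 q₀.2 with hW
  set z : ℂ := if W + Wᴴ = 0 then Complex.I else 1 with hz
  set σ := z • W + (starRingEnd ℂ) z • Wᴴ with hσ
  have hq₀' : ¬ (q₀.1 = 0 ∧ q₀.2 = 0) := by
    rintro ⟨h1, h2⟩
    exact hq₀ (Prod.ext_iff.2 ⟨h1, h2⟩)
  have hWtr : W.trace = 0 := by rw [hW, trace_Wmat, if_neg hq₀']
  have hWHtr : (Wᴴ).trace = 0 := by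
    rw [Matrix.trace_conjTranspose, hWtr, star_zero]
  have hWne : W ≠ 0 := by
    intro h
    have h2 : W (0 + q₀.1) 0 = 0 := by rw [h]; rfl
    rw [hW, Wmat_apply, if_pos rfl, mul_zero, ee_zero] at h2
    exact one_ne_zero h2
  have hσherm : σ.IsHermitian := by
    rw [Matrix.IsHermitian, hσ, Matrix.conjTranspose_add, Matrix.conjTranspose_smul,
      Matrix.conjTranspose_smul, Matrix.conjTranspose_conjTranspose, add_comm]
    congr 1
    rw [show star ((starRingEnd ℂ) z) = z from Complex.conj_conj z]
  have hσtr : σ.trace = 0 := by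
    rw [hσ, Matrix.trace_add, Matrix.trace_smul, Matrix.trace_smul, hWtr, hWHtr,
      smul_zero, smul_zero, add_zero]
  have hσne : σ ≠ 0 := by
    by_cases hc : W + Wᴴ = 0
    · have hzI : z = Complex.I := if_pos hc
      have hWH : Wᴴ = -W := by
        have := eq_neg_of_add_eq_zero_right hc
        exact this
      have hσ2 : σ = (2 * Complex.I) • W := by
        rw [hσ, hzI, hWH, Complex.conj_I, smul_neg, neg_smul, neg_neg, two_mul, add_smul]
      rw [hσ2]
      intro h
      rcases smul_eq_zero.1 h with h' | h'
      · exact (by simp [Complex.I_ne_zero] : (2 * Complex.I : ℂ) ≠ 0) h'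
      · exact hWne h'
    · have hz1 : z = 1 := if_neg hc
      rw [hσ, hz1, map_one, one_smul, one_smul]
      exact hc
  have hTTσ : ∀ q : ZMod n × ZMod n, q ≠ q₀ → q ≠ (-q₀.1, -q₀.2) → TT n q σ = 0 := by
    intro q h1 h2
    unfold TT
    rw [hσ, Matrix.mul_add, Matrix.trace_add, Matrix.mul_smul, Matrix.mul_smul,
      Matrix.trace_smul, Matrix.trace_smul]
    have e1 : (Wmat n q.1 q.2 * W).trace = 0 := by
      rw [hW, Wmat_mul, Matrix.trace_smul, trace_Wmat, if_neg, smul_zero]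
      rintro ⟨ha, hb⟩
      apply h2
      rw [Prod.ext_iff]
      exact ⟨eq_neg_of_add_eq_zero_left ha, eq_neg_of_add_eq_zero_left hb⟩
    have e2 : (Wmat n q.1 q.2 * Wᴴ).trace = 0 := by
      rw [hW, Wmat_conjTranspose, Matrix.mul_smul, Matrix.trace_smul, Wmat_mul,
        Matrix.trace_smul, trace_Wmat, if_neg, smul_zero, smul_zero]
      rintro ⟨ha, hb⟩
      apply h1
      rw [Prod.ext_iff]
      constructor
      · have := eq_neg_of_add_eq_zero_left ha; rw [this, neg_neg]
      · have := eq_neg_of_add_eq_zero_left hb; rw [this, neg_neg]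
    rw [e1, e2, smul_zero, smul_zero, add_zero]
  -- normalization
  set P : ℝ := ∑ a : ZMod n, ∑ b : ZMod n, ‖σ a b‖^2 with hP
  have hPpos : 0 < P := by
    have hex : ∃ a b : ZMod n, σ a b ≠ 0 := by
      by_contra hcon
      push_neg at hcon
      exact hσne (by ext a b; rw [hcon a b]; rfl)
    obtain ⟨a0, b0, hab⟩ := hex
    rw [hP]
    apply Finset.sum_pos'
    · intro a _
      exact Finset.sum_nonneg fun b _ => by positivity
    · refine ⟨a0, Finset.mem_univ a0, ?_⟩
      apply Finset.sum_pos'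
      · intro b _; positivity
      · exact ⟨b0, Finset.mem_univ b0, pow_pos (norm_pos_iff.2 hab) 2⟩
  set s : ℝ := (Real.sqrt P)⁻¹ with hs
  have hsnn : 0 ≤ s := by positivity
  refine ⟨((s:ℝ):ℂ) • σ, ?_, ?_, ?_, ?_⟩
  · rw [Matrix.IsHermitian, Matrix.conjTranspose_smul,
      show star ((s:ℝ):ℂ) = ((s:ℝ):ℂ) from Complex.conj_ofReal s, hσherm.eq]
  · rw [Matrix.trace_smul, hσtr, smul_zero]
  · have : ∀ a b : ZMod n, ‖(((s:ℝ):ℂ) • σ) a b‖^2 = s^2 * ‖σ a b‖^2 := by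
      intro a b
      rw [Matrix.smul_apply, norm_smul, Complex.norm_real, Real.norm_eq_abs,
        abs_of_nonneg hsnn, mul_pow]
    simp_rw [this, ← Finset.mul_sum]
    rw [← hP, hs]
    rw [show ((Real.sqrt P)⁻¹)^2 = (Real.sqrt P ^ 2)⁻¹ by rw [inv_pow],
      Real.sq_sqrt hPpos.le]
    field_simp
  · intro q h1 h2
    unfold TT
    rw [Matrix.mul_smul, Matrix.trace_smul]
    have := hTTσ q h1 h2
    unfold TT at this
    rw [this, smul_zero]
end WeylAux
/-- Theorem: `γ` for complementary channels of discrete Weyl covariant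
channels. For `k` distinct pairs `(x_l,y_l)` and the complementary channel
`[Ψ^C(ρ)]_{l,m} = (1/k)·Tr[W_l ρ W_m^*]`:
`‖A_{Ψ^C}‖∞ = (n/(2k²))·max_{(a,b) ∈ S_n} N(a,b)` and consequently
`γ(Ψ^C) = 1/k + ((n−1)/(2k²))·max_{(a,b) ∈ S_n} N(a,b)`. -/
theorem weyl_complementary_gamma (n k : ℕ) [NeZero n] (hn : 2 ≤ n) (hk : 0 < k)
    (w : Fin k → ZMod n × ZMod n) (hw : Function.Injective w)
    (ΨC : Matrix (ZMod n) (ZMod n) ℂ → Matrix (Fin k) (Fin k) ℂ)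
    (hΨC : ∀ ρ l m, ΨC ρ l m =
      (1 / (k : ℂ)) * (Wmat n (w l).1 (w l).2 * ρ * (Wmat n (w m).1 (w m).2)ᴴ).trace)
    (Nab : ZMod n × ZMod n → ℕ)
    (hNab : ∀ q, Nab q =
      (Finset.univ.filter fun lm : Fin k × Fin k =>
        ((w lm.2).1 - (w lm.1).1, (w lm.2).2 - (w lm.1).2) = q).card +
      (Finset.univ.filter fun lm : Fin k × Fin k =>
        ((w lm.2).1 - (w lm.1).1, (w lm.2).2 - (w lm.1).2) = (-q.1, -q.2)).card)
    (M : Fin (n ^ 2 - 1) → Matrix (ZMod n) (ZMod n) ℂ)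
    (hMherm : ∀ i, (M i).IsHermitian) (hMtr : ∀ i, (M i).trace = 0)
    (hMorth : ∀ i j, ((M i) * (M j)).trace = if i = j then 1 else 0)
    (hMspan : ∀ ρ : Matrix (ZMod n) (ZMod n) ℂ, ρ.IsHermitian → ρ.trace = 0 →
      ρ ∈ Submodule.span ℝ (Set.range M)) :
    opNorm (APhi ΨC M) =
      ((n : ℝ) / (2 * (k : ℝ) ^ 2)) * sSup {x : ℝ | ∃ q ∈ weylS n, x = (Nab q : ℝ)} ∧
    gammaPhi n k (opNorm (APhi ΨC M)) =
      1 / k + (((n : ℝ) - 1) / (2 * (k : ℝ) ^ 2)) *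
        sSup {x : ℝ | ∃ q ∈ weylS n, x = (Nab q : ℝ)} := by
  classical
  have hSfin : ({x : ℝ | ∃ q ∈ weylS n, x = (Nab q : ℝ)}).Finite := by
    apply Set.Finite.subset
      (Set.Finite.image (fun q : ZMod n × ZMod n => (Nab q : ℝ)) (Set.toFinite (weylS n)))
    rintro x ⟨q, hq, rfl⟩
    exact ⟨q, hq, rfl⟩
  have hSne : ({x : ℝ | ∃ q ∈ weylS n, x = (Nab q : ℝ)}).Nonempty :=
    ⟨(Nab (0,1) : ℝ), ⟨(0,1), WeylAux.zero_one_mem n hn, rfl⟩⟩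
  set Nmax : ℝ := sSup {x : ℝ | ∃ q ∈ weylS n, x = (Nab q : ℝ)} with hNmaxdef
  obtain ⟨q₀, hq₀S, hq₀⟩ : ∃ q ∈ weylS n, Nmax = (Nab q : ℝ) := hSne.csSup_mem hSfin
  have hub : ∀ q ∈ weylS n, (Nab q : ℝ) ≤ Nmax := fun q hq =>
    le_csSup hSfin.bddAbove ⟨q, hq, rfl⟩
  have hNsym : ∀ q : ZMod n × ZMod n, Nab (-q.1, -q.2) = Nab q := by
    intro q
    rw [hNab, hNab]
    simp only [neg_neg, Prod.mk.eta]
    exact add_comm _ _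
  have hNle : ∀ q : ZMod n × ZMod n, q ≠ 0 → (Nab q : ℝ) ≤ Nmax := by
    intro q hq
    rcases WeylAux.weylS_rep n hn hq with h | h
    · exact hub q h
    · rw [← hNsym q]; exact hub _ h
  have hk0 : (0:ℝ) < k := by exact_mod_cast hk
  have hn0 : (0:ℝ) < n := by
    have : (2:ℝ) ≤ n := by exact_mod_cast hn
    linarith
  -- the quadratic form of A_Φ
  have quad : ∀ x : EuclideanSpace ℝ (Fin (n^2-1)),
      (inner ℝ x (Matrix.toEuclideanCLM (𝕜 := ℝ) (APhi ΨC M) x) : ℝ)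
        = (1/(2*(k:ℝ)^2)) * ∑ q : ZMod n × ZMod n,
            (Nab q : ℝ) * ‖WeylAux.TT n q (∑ i, ((x i : ℝ):ℂ) • M i)‖^2 := by
    intro x
    rw [WeylAux.inner_toEuclideanCLM]
    have e1 : ∑ i, ∑ j, x i * (APhi ΨC M) i j * x j
        = ∑ a, ∑ b, x a * x b * ((ΨC (M a) * ΨC (M b)).trace).re := by
      apply Finset.sum_congr rfl; intro a _
      apply Finset.sum_congr rfl; intro b _
      rw [show (APhi ΨC M) a b = ((ΨC (M a) * ΨC (M b)).trace).re from rfl]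
      ring
    rw [e1, ← WeylAux.form_expand n M w ΨC hΨC x,
      WeylAux.form_value n w ΨC hΨC Nab hNab (WeylAux.herm_rhox n M hMherm x)]
  have innself : ∀ x : EuclideanSpace ℝ (Fin (n^2-1)), (inner ℝ x x : ℝ) = ∑ i, (x i)^2 := by
    intro x
    rw [PiLp.inner_apply]
    apply Finset.sum_congr rfl
    intro i _
    rw [RCLike.inner_apply, starRingEnd_apply, star_trivial]
    ring
  have par : ∀ x : EuclideanSpace ℝ (Fin (n^2-1)),
      ∑ q : ZMod n × ZMod n, ‖WeylAux.TT n q (∑ i, ((x i : ℝ):ℂ) • M i)‖^2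
        = (n:ℝ) * ∑ i, (x i)^2 := by
    intro x
    rw [WeylAux.parseval n _, WeylAux.frob_rhox n M hMherm hMorth x]
  have pos : ∀ x : EuclideanSpace ℝ (Fin (n^2-1)),
      (0:ℝ) ≤ inner ℝ x (Matrix.toEuclideanCLM (𝕜 := ℝ) (APhi ΨC M) x) := by
    intro x
    rw [quad x]
    apply mul_nonneg (by positivity)
    apply Finset.sum_nonneg
    intro q _
    positivity
  have bound : ∀ x : EuclideanSpace ℝ (Fin (n^2-1)),
      (inner ℝ x (Matrix.toEuclideanCLM (𝕜 := ℝ) (APhi ΨC M) x) : ℝ)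
        ≤ ((n:ℝ)/(2*(k:ℝ)^2) * Nmax) * inner ℝ x x := by
    intro x
    rw [quad x, innself x]
    have hterm : ∀ q : ZMod n × ZMod n,
        (Nab q:ℝ) * ‖WeylAux.TT n q (∑ i, ((x i : ℝ):ℂ) • M i)‖^2
          ≤ Nmax * ‖WeylAux.TT n q (∑ i, ((x i : ℝ):ℂ) • M i)‖^2 := by
      intro q
      by_cases hq : q = 0
      · subst hq
        have h0 : WeylAux.TT n (0 : ZMod n × ZMod n) (∑ i, ((x i : ℝ):ℂ) • M i) = 0 := by
          rw [show ((0 : ZMod n × ZMod n)) = ((0:ZMod n), (0:ZMod n)) from rfl,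
            WeylAux.TT_zero, WeylAux.trace_rhox n M hMtr x]
        rw [h0]
        simp
      · exact mul_le_mul_of_nonneg_right (hNle q hq) (by positivity)
    calc (1/(2*(k:ℝ)^2)) * ∑ q : ZMod n × ZMod n,
          (Nab q : ℝ) * ‖WeylAux.TT n q (∑ i, ((x i : ℝ):ℂ) • M i)‖^2
        ≤ (1/(2*(k:ℝ)^2)) * ∑ q : ZMod n × ZMod n,
          Nmax * ‖WeylAux.TT n q (∑ i, ((x i : ℝ):ℂ) • M i)‖^2 :=
          mul_le_mul_of_nonneg_left (Finset.sum_le_sum fun q _ => hterm q) (by positivity)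
      _ = (1/(2*(k:ℝ)^2)) * (Nmax * ((n:ℝ) * ∑ i, (x i)^2)) := by
          rw [← Finset.mul_sum, par x]
      _ = ((n:ℝ)/(2*(k:ℝ)^2) * Nmax) * ∑ i, (x i)^2 := by ring
  -- symmetry
  have hAsymm : ∀ i j, (APhi ΨC M) i j = (APhi ΨC M) j i := by
    intro i j
    show ((ΨC (M i) * ΨC (M j)).trace).re = ((ΨC (M j) * ΨC (M i)).trace).re
    rw [Matrix.trace_mul_comm]
  have symm : ∀ x y : EuclideanSpace ℝ (Fin (n^2-1)),
      (inner ℝ (Matrix.toEuclideanCLM (𝕜 := ℝ) (APhi ΨC M) x) y : ℝ)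
        = inner ℝ x (Matrix.toEuclideanCLM (𝕜 := ℝ) (APhi ΨC M) y) := by
    intro x y
    rw [real_inner_comm, WeylAux.inner_toEuclideanCLM, WeylAux.inner_toEuclideanCLM]
    rw [Finset.sum_comm]
    apply Finset.sum_congr rfl
    intro i _
    apply Finset.sum_congr rfl
    intro j _
    rw [hAsymm j i]
    ring
  -- extremal vector
  obtain ⟨ρs, hρsH, hρsT, hρsN, hρsTT⟩ :=
    WeylAux.exists_extremal n hn (WeylAux.weylS_ne_zero n hq₀S)
  obtain ⟨c, hc⟩ := (Submodule.mem_span_range_iff_exists_fun ℝ).1 (hMspan ρs hρsH hρsT)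
  set x₀ : EuclideanSpace ℝ (Fin (n^2-1)) := (WithLp.equiv 2 _).symm c with hx₀
  have hρx₀ : (∑ i, ((x₀ i : ℝ):ℂ) • M i) = ρs := by
    rw [← hc]
    apply Finset.sum_congr rfl
    intro i _
    ext a b
    rw [Matrix.smul_apply, Matrix.smul_apply, smul_eq_mul,
      show x₀ i = c i from rfl, ← Complex.real_smul]
  have hinner1 : (inner ℝ x₀ x₀ : ℝ) = 1 := by
    rw [innself x₀, ← WeylAux.frob_rhox n M hMherm hMorth x₀, hρx₀]
    exact hρsN
  have hquadx₀ : (inner ℝ x₀ (Matrix.toEuclideanCLM (𝕜 := ℝ) (APhi ΨC M) x₀) : ℝ)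
      = (n:ℝ)/(2*(k:ℝ)^2) * Nmax := by
    rw [quad x₀, hρx₀]
    have hterm2 : ∀ q : ZMod n × ZMod n,
        (Nab q:ℝ) * ‖WeylAux.TT n q ρs‖^2 = Nmax * ‖WeylAux.TT n q ρs‖^2 := by
      intro q
      by_cases h1 : q = q₀
      · subst h1; rw [← hq₀]
      · by_cases h2 : q = (-q₀.1, -q₀.2)
        · subst h2; rw [hNsym q₀, ← hq₀]
        · rw [hρsTT q h1 h2]; simp
    simp_rw [hterm2]
    rw [← Finset.mul_sum, WeylAux.parseval n ρs, hρsN]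
    ring
  have hnorm : ‖Matrix.toEuclideanCLM (𝕜 := ℝ) (APhi ΨC M)‖
      = (n:ℝ)/(2*(k:ℝ)^2) * Nmax :=
    WeylAux.clm_norm_eq_of_quadratic _ _ symm pos bound ⟨x₀, hinner1, hquadx₀⟩
  have hop : opNorm (APhi ΨC M) = (n:ℝ)/(2*(k:ℝ)^2) * Nmax := hnorm
  constructor
  · exact hop
  · rw [hop]
    have hNbN : Nab q₀ ≤ 2 * k := by
      rw [hNab q₀]
      have b1 := WeylAux.card_shift_le n k w hw q₀
      have b2 := WeylAux.card_shift_le n k w hw (-q₀.1, -q₀.2)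
      omega
    have hNb : Nmax ≤ 2*(k:ℝ) := by
      rw [hq₀]
      exact_mod_cast hNbN
    have hcond : (k:ℝ) * ((n:ℝ)/(2*(k:ℝ)^2) * Nmax) ≤ (n:ℝ) := by
      have h1 : (k:ℝ) * ((n:ℝ)/(2*(k:ℝ)^2) * Nmax) = (n:ℝ) * (Nmax / (2*(k:ℝ))) := by
        field_simp
      rw [h1]
      calc (n:ℝ) * (Nmax / (2*(k:ℝ))) ≤ (n:ℝ) * 1 := by
            apply mul_le_mul_of_nonneg_left _ hn0.le
            rw [div_le_one (by positivity)]
            exact hNb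
        _ = (n:ℝ) := mul_one _
    unfold gammaPhi
    rw [if_pos hcond]
    have heq : (1 - 1/(n:ℝ)) * ((n:ℝ)/(2*(k:ℝ)^2) * Nmax)
        = ((n:ℝ)-1)/(2*(k:ℝ)^2) * Nmax := by
      field_simp
    rw [heq]
end
end
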